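/- arXiv:1204.5846 — 5 statements merged into one kernel-verified Lean document; each statement's English description precedes it below -/
import Mathlib

section
/- For each H ∈ A(W) choose a linear form α_H on V with kernel H, and set Q := ∏_{H∈A(W)} α_H, Q∨ := ∏_{H∈A(W)} α_H^{e_H−1}, and Disc := ∏_{H∈A(W)} α_H^{e_H}, regarded as polynomial functions on V. If the coset element wφ is ζ-regular, then Q∘(wφ) = ζ^Nhyp·Q, Q∨∘(wφ) = ζ^Nref·Q∨, and Disc∘(wφ) = ζ^{e_W}·Disc (where Q∘g denotes the function v ↦ Q(g(v))). -/
namespace Stmt1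

variable {V : Type*} [AddCommGroup V] [Module ℂ V]

/-- A reflection: an invertible linear endomorphism of finite order whose
fixed-point subspace is a hyperplane. -/
def IsReflection (g : (V →ₗ[ℂ] V)ˣ) : Prop :=
  IsOfFinOrder g ∧
    Module.finrank ℂ (LinearMap.ker ((g : V →ₗ[ℂ] V) - LinearMap.id)) + 1 =
      Module.finrank ℂ V

/-- The set `A(W)` of reflecting hyperplanes of `W`. -/
def reflectingHyperplanes (W : Subgroup (V →ₗ[ℂ] V)ˣ) : Set (Submodule ℂ V) :=
  {H | ∃ g ∈ W, IsReflection g ∧ LinearMap.ker ((g : V →ₗ[ℂ] V) - LinearMap.id) = H}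

/-- `e_H`, the order of the pointwise stabilizer of `H` in `W`. -/
noncomputable def orderH (W : Subgroup (V →ₗ[ℂ] V)ˣ) (H : Submodule ℂ V) : ℕ :=
  Nat.card {g : (V →ₗ[ℂ] V)ˣ // g ∈ W ∧ ∀ x ∈ H, (g : V →ₗ[ℂ] V) x = x}

/-- `Nhyp`, the number of reflecting hyperplanes of `W`. -/
noncomputable def Nhyp (W : Subgroup (V →ₗ[ℂ] V)ˣ) : ℕ :=
  Nat.card (reflectingHyperplanes W)

/-- `Nref`, the number of reflections in `W`. -/
noncomputable def Nref (W : Subgroup (V →ₗ[ℂ] V)ˣ) : ℕ :=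
  Nat.card {g : (V →ₗ[ℂ] V)ˣ // g ∈ W ∧ IsReflection g}

/-- The set of regular vectors: those lying on no reflecting hyperplane. -/
def Vreg (W : Subgroup (V →ₗ[ℂ] V)ˣ) : Set V :=
  {v : V | ∀ H ∈ reflectingHyperplanes W, v ∉ H}

/-- `W` is generated by the reflections it contains. -/
def GeneratedByReflections (W : Subgroup (V →ₗ[ℂ] V)ˣ) : Prop :=
  W = Subgroup.closure {g : (V →ₗ[ℂ] V)ˣ | g ∈ W ∧ IsReflection g}

-- AUX START

lemma inv_apply_apply (g : (V →ₗ[ℂ] V)ˣ) (y : V) :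
    ((g⁻¹ : (V →ₗ[ℂ] V)ˣ) : V →ₗ[ℂ] V) (((g : (V →ₗ[ℂ] V)ˣ) : V →ₗ[ℂ] V) y) = y := by
  rw [← Module.End.mul_apply, ← Units.val_mul, inv_mul_cancel, Units.val_one, Module.End.one_apply]

lemma apply_inv_apply (g : (V →ₗ[ℂ] V)ˣ) (y : V) :
    ((g : (V →ₗ[ℂ] V)ˣ) : V →ₗ[ℂ] V) (((g⁻¹ : (V →ₗ[ℂ] V)ˣ) : V →ₗ[ℂ] V) y) = y := by
  rw [← Module.End.mul_apply, ← Units.val_mul, mul_inv_cancel, Units.val_one, Module.End.one_apply]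

lemma ker_conj (g u : (V →ₗ[ℂ] V)ˣ) :
    LinearMap.ker (((g * u * g⁻¹ : (V →ₗ[ℂ] V)ˣ) : V →ₗ[ℂ] V) - LinearMap.id) =
      Submodule.comap ((g⁻¹ : (V →ₗ[ℂ] V)ˣ) : V →ₗ[ℂ] V)
        (LinearMap.ker ((u : V →ₗ[ℂ] V) - LinearMap.id)) := by
  ext x
  simp only [LinearMap.mem_ker, Submodule.mem_comap, LinearMap.sub_apply, LinearMap.id_apply,
    sub_eq_zero, Units.val_mul, Module.End.mul_apply]
  constructor
  · intro hx
    have := congrArg ((g⁻¹ : (V →ₗ[ℂ] V)ˣ) : V →ₗ[ℂ] V) hx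
    rwa [inv_apply_apply] at this
  · intro hx
    rw [hx, apply_inv_apply]

lemma comap_inv_eq_map (g : (V →ₗ[ℂ] V)ˣ) (K : Submodule ℂ V) :
    Submodule.comap ((g⁻¹ : (V →ₗ[ℂ] V)ˣ) : V →ₗ[ℂ] V) K =
      Submodule.map ((g : (V →ₗ[ℂ] V)ˣ) : V →ₗ[ℂ] V) K := by
  ext x
  simp only [Submodule.mem_comap, Submodule.mem_map]
  constructor
  · intro hx
    exact ⟨_, hx, apply_inv_apply g x⟩
  · rintro ⟨y, hy, rfl⟩
    rwa [inv_apply_apply]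

lemma comap_comap_inv (g : (V →ₗ[ℂ] V)ˣ) (K : Submodule ℂ V) :
    Submodule.comap ((g : (V →ₗ[ℂ] V)ˣ) : V →ₗ[ℂ] V)
      (Submodule.comap ((g⁻¹ : (V →ₗ[ℂ] V)ˣ) : V →ₗ[ℂ] V) K) = K := by
  ext x
  simp only [Submodule.mem_comap, inv_apply_apply]

lemma comap_inv_comap (g : (V →ₗ[ℂ] V)ˣ) (K : Submodule ℂ V) :
    Submodule.comap ((g⁻¹ : (V →ₗ[ℂ] V)ˣ) : V →ₗ[ℂ] V)
      (Submodule.comap ((g : (V →ₗ[ℂ] V)ˣ) : V →ₗ[ℂ] V) K) = K := by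
  ext x
  simp only [Submodule.mem_comap, apply_inv_apply]

lemma finrank_comap_inv [FiniteDimensional ℂ V] (g : (V →ₗ[ℂ] V)ˣ) (K : Submodule ℂ V) :
    Module.finrank ℂ (Submodule.comap ((g⁻¹ : (V →ₗ[ℂ] V)ˣ) : V →ₗ[ℂ] V) K) =
      Module.finrank ℂ K := by
  rw [comap_inv_eq_map]
  exact LinearEquiv.finrank_map_eq (LinearMap.GeneralLinearGroup.generalLinearEquiv ℂ V g) K

lemma isReflection_conj [FiniteDimensional ℂ V] {u : (V →ₗ[ℂ] V)ˣ} (g : (V →ₗ[ℂ] V)ˣ)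
    (hu : IsReflection u) : IsReflection (g * u * g⁻¹) := by
  constructor
  · obtain ⟨n, hn, hpow⟩ := hu.1.exists_pow_eq_one
    refine isOfFinOrder_iff_pow_eq_one.mpr ⟨n, hn, ?_⟩
    rw [conj_pow, hpow, mul_one, mul_inv_cancel]
  · rw [ker_conj, finrank_comap_inv]
    exact hu.2


lemma proportional {f h : V →ₗ[ℂ] ℂ} (hk : LinearMap.ker f = LinearMap.ker h)
    (hf : LinearMap.ker f ≠ ⊤) : ∃ c : ℂ, c ≠ 0 ∧ ∀ x, h x = c * f x := by
  obtain ⟨v, hv⟩ : ∃ v, f v ≠ 0 := by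
    by_contra hc
    push_neg at hc
    exact hf (LinearMap.ker_eq_top.mpr (LinearMap.ext fun x => hc x))
  set u : V := (f v)⁻¹ • v with hu
  have hfu : f u = 1 := by
    rw [hu, map_smul, smul_eq_mul, inv_mul_cancel₀ hv]
  refine ⟨h u, ?_, ?_⟩
  · intro h0
    have : u ∈ LinearMap.ker h := h0
    rw [← hk, LinearMap.mem_ker, hfu] at this
    exact one_ne_zero this
  · intro x
    have hmem : x - f x • u ∈ LinearMap.ker f := by
      rw [LinearMap.mem_ker, map_sub, map_smul, smul_eq_mul, hfu, mul_one, sub_self]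
    rw [hk, LinearMap.mem_ker, map_sub, map_smul, smul_eq_mul, sub_eq_zero] at hmem
    rw [hmem, mul_comm]

lemma comap_mem_reflectingHyperplanes [FiniteDimensional ℂ V] {W : Subgroup (V →ₗ[ℂ] V)ˣ}
    (g : (V →ₗ[ℂ] V)ˣ) (hg : ∀ u : (V →ₗ[ℂ] V)ˣ, g * u * g⁻¹ ∈ W ↔ u ∈ W)
    {H : Submodule ℂ V} (hH : H ∈ reflectingHyperplanes W) :
    Submodule.comap ((g : (V →ₗ[ℂ] V)ˣ) : V →ₗ[ℂ] V) H ∈ reflectingHyperplanes W := by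
  obtain ⟨s, hsW, hs, hks⟩ := hH
  refine ⟨g⁻¹ * s * g, ?_, ?_, ?_⟩
  · rw [← hg (g⁻¹ * s * g)]
    have : g * (g⁻¹ * s * g) * g⁻¹ = s := by group
    rwa [this]
  · have : g⁻¹ * s * g = g⁻¹ * s * (g⁻¹)⁻¹ := by rw [inv_inv]
    rw [this]
    exact isReflection_conj g⁻¹ hs
  · have : g⁻¹ * s * g = g⁻¹ * s * (g⁻¹)⁻¹ := by rw [inv_inv]
    rw [this, ker_conj g⁻¹ s, inv_inv, hks]

lemma orderH_comap {W : Subgroup (V →ₗ[ℂ] V)ˣ}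
    (g : (V →ₗ[ℂ] V)ˣ) (hg : ∀ u : (V →ₗ[ℂ] V)ˣ, g * u * g⁻¹ ∈ W ↔ u ∈ W)
    (H : Submodule ℂ V) :
    orderH W (Submodule.comap ((g : (V →ₗ[ℂ] V)ˣ) : V →ₗ[ℂ] V) H) = orderH W H := by
  apply Nat.card_congr
  refine
    { toFun := fun u => ⟨g * u.1 * g⁻¹, (hg u.1).mpr u.2.1, ?_⟩
      invFun := fun u => ⟨g⁻¹ * u.1 * g, ?_, ?_⟩
      left_inv := fun u => by
        apply Subtype.ext
        show g⁻¹ * (g * u.1 * g⁻¹) * g = u.1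
        group
      right_inv := fun u => by
        apply Subtype.ext
        show g * (g⁻¹ * u.1 * g) * g⁻¹ = u.1
        group }
  · intro x hx
    have hx' : ((g⁻¹ : (V →ₗ[ℂ] V)ˣ) : V →ₗ[ℂ] V) x ∈
        Submodule.comap ((g : (V →ₗ[ℂ] V)ˣ) : V →ₗ[ℂ] V) H := by
      simp only [Submodule.mem_comap, apply_inv_apply]; exact hx
    have := u.2.2 _ hx'
    show ((g : (V →ₗ[ℂ] V)ˣ) : V →ₗ[ℂ] V)
      (((u.1 : (V →ₗ[ℂ] V)ˣ) : V →ₗ[ℂ] V) (((g⁻¹ : (V →ₗ[ℂ] V)ˣ) : V →ₗ[ℂ] V) x)) = x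
    rw [this, apply_inv_apply]
  · rw [← hg (g⁻¹ * u.1 * g)]
    have : g * (g⁻¹ * u.1 * g) * g⁻¹ = u.1 := by group
    rw [this]; exact u.2.1
  · intro x hx
    have := u.2.2 _ (Submodule.mem_comap.mp hx)
    show ((g⁻¹ : (V →ₗ[ℂ] V)ˣ) : V →ₗ[ℂ] V)
      (((u.1 : (V →ₗ[ℂ] V)ˣ) : V →ₗ[ℂ] V) (((g : (V →ₗ[ℂ] V)ˣ) : V →ₗ[ℂ] V) x)) = x
    rw [this, inv_apply_apply]


lemma mem_A_finrank {W : Subgroup (V →ₗ[ℂ] V)ˣ} {H : Submodule ℂ V}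
    (hH : H ∈ reflectingHyperplanes W) :
    Module.finrank ℂ H + 1 = Module.finrank ℂ V := by
  obtain ⟨s, _, hs, rfl⟩ := hH; exact hs.2

lemma mem_A_ne_top [FiniteDimensional ℂ V] {W : Subgroup (V →ₗ[ℂ] V)ˣ} {H : Submodule ℂ V}
    (hH : H ∈ reflectingHyperplanes W) : H ≠ ⊤ := by
  intro h
  have h2 := mem_A_finrank hH
  rw [h, finrank_top] at h2
  omega

lemma mem_W_isOfFinOrder {W : Subgroup (V →ₗ[ℂ] V)ˣ} [Finite W] {u : (V →ₗ[ℂ] V)ˣ}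
    (hu : u ∈ W) : IsOfFinOrder u := by
  have h : IsOfFinOrder (⟨u, hu⟩ : W) := isOfFinOrder_of_finite _
  exact W.subtype.isOfFinOrder h

lemma stab_ne_one_reflection [FiniteDimensional ℂ V] {W : Subgroup (V →ₗ[ℂ] V)ˣ} [Finite W]
    {H : Submodule ℂ V} (hH : H ∈ reflectingHyperplanes W) {u : (V →ₗ[ℂ] V)ˣ} (huW : u ∈ W)
    (hfix : ∀ x ∈ H, (u : V →ₗ[ℂ] V) x = x) (hne : u ≠ 1) :
    IsReflection u ∧ LinearMap.ker ((u : V →ₗ[ℂ] V) - LinearMap.id) = H := by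
  have hle : H ≤ LinearMap.ker ((u : V →ₗ[ℂ] V) - LinearMap.id) := fun x hx => by
    rw [LinearMap.mem_ker, LinearMap.sub_apply, LinearMap.id_apply, hfix x hx, sub_self]
  have hker_ne : LinearMap.ker ((u : V →ₗ[ℂ] V) - LinearMap.id) ≠ ⊤ := by
    intro h
    apply hne
    apply Units.ext
    have h1 : (u : V →ₗ[ℂ] V) - LinearMap.id = 0 := LinearMap.ker_eq_top.mp h
    have h2 : (u : V →ₗ[ℂ] V) = LinearMap.id := by rwa [sub_eq_zero] at h1
    rw [h2]; rfl
  have hlt := Submodule.finrank_lt hker_ne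
  have hrk := mem_A_finrank hH
  have heq : H = LinearMap.ker ((u : V →ₗ[ℂ] V) - LinearMap.id) :=
    Submodule.eq_of_le_of_finrank_le hle (by omega)
  exact ⟨⟨mem_W_isOfFinOrder huW, by rw [← heq]; exact hrk⟩, heq.symm⟩

lemma A_finite (W : Subgroup (V →ₗ[ℂ] V)ˣ) [Finite W] :
    (reflectingHyperplanes W).Finite := by
  have h1 : {u : (V →ₗ[ℂ] V)ˣ | u ∈ W ∧ IsReflection u}.Finite :=
    (Set.toFinite (W : Set (V →ₗ[ℂ] V)ˣ)).subset fun u hu => hu.1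
  have h2 : reflectingHyperplanes W =
      (fun u : (V →ₗ[ℂ] V)ˣ => LinearMap.ker ((u : V →ₗ[ℂ] V) - LinearMap.id)) ''
        {u | u ∈ W ∧ IsReflection u} := by
    ext H
    constructor
    · rintro ⟨s, h1, h2, rfl⟩; exact ⟨s, ⟨h1, h2⟩, rfl⟩
    · rintro ⟨s, ⟨h1, h2⟩, rfl⟩; exact ⟨s, h1, h2, rfl⟩
  rw [h2]
  exact h1.image _

lemma stab_finite (W : Subgroup (V →ₗ[ℂ] V)ˣ) [Finite W] (H : Submodule ℂ V) :
    {u : (V →ₗ[ℂ] V)ˣ | u ∈ W ∧ ∀ x ∈ H, (u : V →ₗ[ℂ] V) x = x}.Finite :=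
  (Set.toFinite (W : Set (V →ₗ[ℂ] V)ˣ)).subset fun u hu => hu.1

lemma orderH_eq_card (W : Subgroup (V →ₗ[ℂ] V)ˣ) [Finite W] (H : Submodule ℂ V) :
    orderH W H = (stab_finite W H).toFinset.card := by
  have h : orderH W H =
      Nat.card {u : (V →ₗ[ℂ] V)ˣ | u ∈ W ∧ ∀ x ∈ H, (u : V →ₗ[ℂ] V) x = x} := rfl
  rw [h, Nat.card_coe_set_eq, Set.ncard_eq_toFinset_card _ (stab_finite W H)]

lemma refl_finite (W : Subgroup (V →ₗ[ℂ] V)ˣ) [Finite W] :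
    {u : (V →ₗ[ℂ] V)ˣ | u ∈ W ∧ IsReflection u}.Finite :=
  (Set.toFinite (W : Set (V →ₗ[ℂ] V)ˣ)).subset fun u hu => hu.1

lemma nref_eq_card (W : Subgroup (V →ₗ[ℂ] V)ˣ) [Finite W] :
    Nref W = (refl_finite W).toFinset.card := by
  have h : Nref W = Nat.card {u : (V →ₗ[ℂ] V)ˣ | u ∈ W ∧ IsReflection u} := rfl
  rw [h, Nat.card_coe_set_eq, Set.ncard_eq_toFinset_card _ (refl_finite W)]

lemma nhyp_eq_card (W : Subgroup (V →ₗ[ℂ] V)ˣ) [Finite W] :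
    Nhyp W = (A_finite W).toFinset.card := by
  rw [Nhyp, Nat.card_coe_set_eq, Set.ncard_eq_toFinset_card _ (A_finite W)]

lemma one_mem_stab (W : Subgroup (V →ₗ[ℂ] V)ˣ) [Finite W] (H : Submodule ℂ V) :
    (1 : (V →ₗ[ℂ] V)ˣ) ∈ (stab_finite W H).toFinset := by
  rw [Set.Finite.mem_toFinset]
  exact ⟨W.one_mem, fun x _ => rfl⟩

lemma orderH_pos (W : Subgroup (V →ₗ[ℂ] V)ˣ) [Finite W] (H : Submodule ℂ V) :
    0 < orderH W H := by
  rw [orderH_eq_card]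
  exact Finset.card_pos.mpr ⟨1, one_mem_stab W H⟩

lemma nref_sum [FiniteDimensional ℂ V] (W : Subgroup (V →ₗ[ℂ] V)ˣ) [Finite W] :
    ∑ H ∈ (A_finite W).toFinset, (orderH W H - 1) = Nref W := by
  classical
  rw [nref_eq_card W]
  rw [Finset.card_eq_sum_card_fiberwise
    (f := fun u : (V →ₗ[ℂ] V)ˣ => LinearMap.ker ((u : V →ₗ[ℂ] V) - LinearMap.id))
    (t := (A_finite W).toFinset) ?_]
  · apply Finset.sum_congr rfl
    intro H hH
    rw [Set.Finite.mem_toFinset] at hH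
    have hfil : (refl_finite W).toFinset.filter
        (fun u : (V →ₗ[ℂ] V)ˣ => LinearMap.ker ((u : V →ₗ[ℂ] V) - LinearMap.id) = H) =
        ((stab_finite W H).toFinset).erase 1 := by
      ext u
      rw [Finset.mem_filter, Finset.mem_erase, Set.Finite.mem_toFinset,
        Set.Finite.mem_toFinset]
      constructor
      · rintro ⟨⟨huW, hur⟩, hk⟩
        have hne : u ≠ 1 := by
          rintro rfl
          apply mem_A_ne_top hH
          rw [← hk]
          rw [LinearMap.ker_eq_top]
          ext x
          simp
        refine ⟨hne, huW, fun x hx => ?_⟩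
        have : x ∈ LinearMap.ker ((u : V →ₗ[ℂ] V) - LinearMap.id) := hk ▸ hx
        rw [LinearMap.mem_ker, LinearMap.sub_apply, LinearMap.id_apply, sub_eq_zero] at this
        exact this
      · rintro ⟨hne, huW, hfix⟩
        obtain ⟨h1, h2⟩ := stab_ne_one_reflection hH huW hfix hne
        exact ⟨⟨huW, h1⟩, h2⟩
    rw [hfil, Finset.card_erase_of_mem (one_mem_stab W H), orderH_eq_card]
  · intro u hu
    rw [Finset.mem_coe, Set.Finite.mem_toFinset] at hu ⊢
    exact ⟨u, hu.1, hu.2, rfl⟩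



/-- If `wφ` is `ζ`-regular then `Q ∘ (wφ) = ζ ^ Nhyp • Q`, `Q∨ ∘ (wφ) = ζ ^ Nref • Q∨`
and `Disc ∘ (wφ) = ζ ^ e_W • Disc`, where `Q`, `Q∨` and `Disc` are the products of the
chosen linear forms `α_H` with exponents `1`, `e_H - 1` and `e_H` respectively. -/
theorem statement1 [FiniteDimensional ℂ V] (hV : 0 < Module.finrank ℂ V)
    (W : Subgroup (V →ₗ[ℂ] V)ˣ) [Finite W] (hgen : GeneratedByReflections W)
    (φ : (V →ₗ[ℂ] V)ˣ) (hφ : IsOfFinOrder φ)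
    (hφW : ∀ g : (V →ₗ[ℂ] V)ˣ, φ * g * φ⁻¹ ∈ W ↔ g ∈ W)
    (α : Submodule ℂ V → (V →ₗ[ℂ] ℂ))
    (hα : ∀ H ∈ reflectingHyperplanes W, LinearMap.ker (α H) = H)
    (ζ : ℂ) (w : (V →ₗ[ℂ] V)ˣ) (hw : w ∈ W)
    (hreg : ∃ v ∈ Vreg W, ((w * φ : (V →ₗ[ℂ] V)ˣ) : V →ₗ[ℂ] V) v = ζ • v) :
    (∀ x : V,
      (∏ᶠ H ∈ reflectingHyperplanes W,
          α H (((w * φ : (V →ₗ[ℂ] V)ˣ) : V →ₗ[ℂ] V) x)) =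
        ζ ^ Nhyp W * ∏ᶠ H ∈ reflectingHyperplanes W, α H x) ∧
    (∀ x : V,
      (∏ᶠ H ∈ reflectingHyperplanes W,
          α H (((w * φ : (V →ₗ[ℂ] V)ˣ) : V →ₗ[ℂ] V) x) ^ (orderH W H - 1)) =
        ζ ^ Nref W * ∏ᶠ H ∈ reflectingHyperplanes W, α H x ^ (orderH W H - 1)) ∧
    (∀ x : V,
      (∏ᶠ H ∈ reflectingHyperplanes W,
          α H (((w * φ : (V →ₗ[ℂ] V)ˣ) : V →ₗ[ℂ] V) x) ^ orderH W H) =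
        ζ ^ (Nref W + Nhyp W) * ∏ᶠ H ∈ reflectingHyperplanes W, α H x ^ orderH W H) := by
  classical
  obtain ⟨v, hvreg, hv⟩ := hreg
  set g : (V →ₗ[ℂ] V)ˣ := w * φ with hgdef
  have hgW : ∀ u : (V →ₗ[ℂ] V)ˣ, g * u * g⁻¹ ∈ W ↔ u ∈ W := by
    intro u
    rw [hgdef]
    have h1 : w * φ * u * (w * φ)⁻¹ = w * (φ * u * φ⁻¹ * w⁻¹) := by group
    rw [h1, W.mul_mem_cancel_left hw, W.mul_mem_cancel_right (W.inv_mem hw), hφW]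
  have hgW' : ∀ u : (V →ₗ[ℂ] V)ˣ, g⁻¹ * u * (g⁻¹)⁻¹ ∈ W ↔ u ∈ W := by
    intro u
    rw [inv_inv]
    have h2 : g * (g⁻¹ * u * g) * g⁻¹ = u := by group
    constructor
    · intro h
      have h3 := (hgW (g⁻¹ * u * g)).mpr h
      rwa [h2] at h3
    · intro h
      exact (hgW (g⁻¹ * u * g)).mp (by rwa [h2])
  have hAfin := A_finite W
  set Af := hAfin.toFinset with hAf
  have hmemAf : ∀ H : Submodule ℂ V, H ∈ Af ↔ H ∈ reflectingHyperplanes W := fun H =>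
    Set.Finite.mem_toFinset _
  have hσ : ∀ H ∈ Af, Submodule.comap (g : V →ₗ[ℂ] V) H ∈ Af := fun H hH =>
    (hmemAf _).mpr (comap_mem_reflectingHyperplanes g hgW ((hmemAf _).mp hH))
  have hτ : ∀ H ∈ Af, Submodule.comap ((g⁻¹ : (V →ₗ[ℂ] V)ˣ) : V →ₗ[ℂ] V) H ∈ Af := fun H hH =>
    (hmemAf _).mpr (comap_mem_reflectingHyperplanes g⁻¹ hgW' ((hmemAf _).mp hH))
  have horder : ∀ H : Submodule ℂ V,
      orderH W (Submodule.comap (g : V →ₗ[ℂ] V) H) = orderH W H := orderH_comap g hgW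
  have hex : ∀ H : Submodule ℂ V, ∃ c : ℂ, H ∈ reflectingHyperplanes W →
      (c ≠ 0 ∧ ∀ x : V, α H ((g : V →ₗ[ℂ] V) x) =
        c * α (Submodule.comap (g : V →ₗ[ℂ] V) H) x) := by
    intro H
    by_cases hH : H ∈ reflectingHyperplanes W
    · set K := Submodule.comap (g : V →ₗ[ℂ] V) H with hK
      have hKrh : K ∈ reflectingHyperplanes W := comap_mem_reflectingHyperplanes g hgW hH
      have hkf : LinearMap.ker (α K) = K := hα K hKrh
      have hkh : LinearMap.ker ((α H).comp (g : V →ₗ[ℂ] V)) = K := by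
        rw [LinearMap.ker_comp, hα H hH]
      have hne : LinearMap.ker (α K) ≠ ⊤ := by rw [hkf]; exact mem_A_ne_top hKrh
      obtain ⟨cc, hc0, hcc⟩ := proportional (hkf.trans hkh.symm) hne
      exact ⟨cc, fun _ => ⟨hc0, fun x => hcc x⟩⟩
    · exact ⟨1, fun h => absurd h hH⟩
  choose c hc using hex
  have hαv : ∀ H ∈ Af, α H v ≠ 0 := by
    intro H hH h0
    have hHrh := (hmemAf H).mp hH
    exact hvreg H hHrh ((hα H hHrh) ▸ (LinearMap.mem_ker.mpr h0))
  have key : ∀ k : Submodule ℂ V → ℕ,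
      (∀ H ∈ Af, k (Submodule.comap (g : V →ₗ[ℂ] V) H) = k H) →
      ∀ x : V, (∏ H ∈ Af, α H ((g : V →ₗ[ℂ] V) x) ^ k H) =
        ζ ^ (∑ H ∈ Af, k H) * ∏ H ∈ Af, α H x ^ k H := by
    intro k hk
    have main : ∀ x : V, (∏ H ∈ Af, α H ((g : V →ₗ[ℂ] V) x) ^ k H) =
        (∏ H ∈ Af, c H ^ k H) * ∏ H ∈ Af, α H x ^ k H := by
      intro x
      have step1 : (∏ H ∈ Af, α H ((g : V →ₗ[ℂ] V) x) ^ k H) =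
          ∏ H ∈ Af, (c H ^ k H * α (Submodule.comap (g : V →ₗ[ℂ] V) H) x ^ k H) :=
        Finset.prod_congr rfl fun H hH => by
          rw [(hc H ((hmemAf H).mp hH)).2 x, mul_pow]
      rw [step1, Finset.prod_mul_distrib]
      congr 1
      have step2 : (∏ H ∈ Af, α (Submodule.comap (g : V →ₗ[ℂ] V) H) x ^ k H) =
          ∏ H ∈ Af, α (Submodule.comap (g : V →ₗ[ℂ] V) H) x ^
            k (Submodule.comap (g : V →ₗ[ℂ] V) H) :=
        Finset.prod_congr rfl fun H hH => by rw [hk H hH]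
      rw [step2]
      exact Finset.prod_nbij' (fun H => Submodule.comap (g : V →ₗ[ℂ] V) H)
        (fun H => Submodule.comap ((g⁻¹ : (V →ₗ[ℂ] V)ˣ) : V →ₗ[ℂ] V) H) hσ hτ
        (fun H _ => comap_inv_comap g H) (fun H _ => comap_comap_inv g H)
        (fun H _ => rfl)
    have e1 : (∏ H ∈ Af, α H ((g : V →ₗ[ℂ] V) v) ^ k H) =
        ζ ^ (∑ H ∈ Af, k H) * ∏ H ∈ Af, α H v ^ k H := by
      rw [hv]
      rw [show (∏ H ∈ Af, α H (ζ • v) ^ k H) = ∏ H ∈ Af, (ζ ^ k H * α H v ^ k H) from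
        Finset.prod_congr rfl fun H _ => by rw [map_smul, smul_eq_mul, mul_pow]]
      rw [Finset.prod_mul_distrib, Finset.prod_pow_eq_pow_sum]
    have hPne : (∏ H ∈ Af, α H v ^ k H) ≠ 0 :=
      Finset.prod_ne_zero_iff.mpr fun H hH => pow_ne_zero _ (hαv H hH)
    have hC : (∏ H ∈ Af, c H ^ k H) = ζ ^ (∑ H ∈ Af, k H) :=
      mul_right_cancel₀ hPne ((main v).symm.trans e1)
    intro x
    rw [main x, hC]
  have hNhyp : Nhyp W = ∑ _H ∈ Af, 1 := by
    rw [nhyp_eq_card W, Finset.card_eq_sum_ones]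
  have hNref : Nref W = ∑ H ∈ Af, (orderH W H - 1) := (nref_sum W).symm
  have hNsum : Nref W + Nhyp W = ∑ H ∈ Af, orderH W H := by
    rw [hNref, hNhyp, ← Finset.sum_add_distrib]
    exact Finset.sum_congr rfl fun H _ => by
      have := orderH_pos W H; omega
  refine ⟨?_, ?_, ?_⟩
  · intro x
    have h1 := key (fun _ => 1) (fun H _ => rfl) x
    simp only [pow_one] at h1
    rw [finprod_mem_eq_finite_toFinset_prod _ hAfin,
      finprod_mem_eq_finite_toFinset_prod _ hAfin, hNhyp]
    exact h1
  · intro x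
    have h1 := key (fun H => orderH W H - 1) (fun H _ => by rw [horder]) x
    rw [finprod_mem_eq_finite_toFinset_prod _ hAfin,
      finprod_mem_eq_finite_toFinset_prod _ hAfin, hNref]
    exact h1
  · intro x
    have h1 := key (fun H => orderH W H) (fun H _ => by rw [horder]) x
    rw [finprod_mem_eq_finite_toFinset_prod _ hAfin,
      finprod_mem_eq_finite_toFinset_prod _ hAfin, hNsum]
    exact h1

end Stmt1
end

section
/- Suppose K is a subfield of ℝ. For each H ∈ A(W) choose a linear form α_H on V with kernel H and set Disc := ∏_{H∈A(W)} α_H^{e_H}, a polynomial function on V (over such a real field every e_H equals 2). Then Disc∘φ = Disc, i.e. φ fixes the discriminant of W; equivalently, the root of unity Δ by which φ rescales Disc equals 1 for a real reflection coset. -/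
set_option synthInstance.maxHeartbeats 1000000
set_option maxHeartbeats 2000000

namespace Stmt2

section GeneralField

variable {F : Type*} [Field F] {V : Type*} [AddCommGroup V] [Module F V]

/-- A reflection: an invertible linear endomorphism of finite order whose
fixed-point subspace is a hyperplane. -/
def IsReflection (g : (V →ₗ[F] V)ˣ) : Prop :=
  IsOfFinOrder g ∧
    Module.finrank F (LinearMap.ker ((g : V →ₗ[F] V) - LinearMap.id)) + 1 =
      Module.finrank F V

/-- The set `A(W)` of reflecting hyperplanes of `W`. -/
def reflectingHyperplanes (W : Subgroup (V →ₗ[F] V)ˣ) : Set (Submodule F V) :=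
  {H | ∃ g ∈ W, IsReflection g ∧ LinearMap.ker ((g : V →ₗ[F] V) - LinearMap.id) = H}

/-- `e_H`, the order of the pointwise stabilizer of `H` in `W`. -/
noncomputable def orderH (W : Subgroup (V →ₗ[F] V)ˣ) (H : Submodule F V) : ℕ :=
  Nat.card {g : (V →ₗ[F] V)ˣ // g ∈ W ∧ ∀ x ∈ H, (g : V →ₗ[F] V) x = x}

/-- `W` is generated by the reflections it contains. -/
def GeneratedByReflections (W : Subgroup (V →ₗ[F] V)ˣ) : Prop :=
  W = Subgroup.closure {g : (V →ₗ[F] V)ˣ | g ∈ W ∧ IsReflection g}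

end GeneralField

section Aux

variable {K : Type*} [Field K] {V : Type*} [AddCommGroup V] [Module K V]

lemma finOrder_of_mem {G : Type*} [Group G] {W : Subgroup G} [Finite W] {g : G}
    (hg : g ∈ W) : IsOfFinOrder g := by
  have h1 : IsOfFinOrder (⟨g, hg⟩ : W) := isOfFinOrder_of_finite _
  exact W.subtype.isOfFinOrder h1

lemma fix_of_ker {g : (V →ₗ[K] V)ˣ} {H : Submodule K V}
    (h : LinearMap.ker ((g : V →ₗ[K] V) - LinearMap.id) = H) :
    ∀ x ∈ H, (g : V →ₗ[K] V) x = x := by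
  intro x hx
  have hx' : ((g : V →ₗ[K] V) - LinearMap.id : V →ₗ[K] V) x = 0 := by
    rw [← LinearMap.mem_ker, h]; exact hx
  simpa [LinearMap.sub_apply, sub_eq_zero] using hx'

lemma sup_span_eq_top [FiniteDimensional K V] {H : Submodule K V}
    (hH : Module.finrank K H + 1 = Module.finrank K V) {v : V} (hv : v ∉ H) :
    H ⊔ (K ∙ v) = ⊤ := by
  have hlt : H < H ⊔ (K ∙ v) := by
    refine lt_of_le_of_ne le_sup_left ?_
    intro he
    exact hv (he ▸ Submodule.mem_sup_right (Submodule.mem_span_singleton_self v))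
  have h1 : Module.finrank K H < Module.finrank K ↥(H ⊔ (K ∙ v)) :=
    Submodule.finrank_lt_finrank_of_lt hlt
  have h2 : Module.finrank K ↥(H ⊔ (K ∙ v)) ≤ Module.finrank K V :=
    Submodule.finrank_le _
  exact Submodule.eq_top_of_finrank_eq (by omega)

lemma eq_one_of_fixes {g : (V →ₗ[K] V)ˣ} {H : Submodule K V} {v : V}
    (htop : H ⊔ (K ∙ v) = ⊤)
    (hfix : ∀ x ∈ H, (g : V →ₗ[K] V) x = x)
    (hv : (g : V →ₗ[K] V) v = v) : g = 1 := by
  apply Units.ext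
  apply LinearMap.ext
  intro x
  have hx : x ∈ H ⊔ (K ∙ v) := htop ▸ Submodule.mem_top
  obtain ⟨y, hy, z, hz, rfl⟩ := Submodule.mem_sup.mp hx
  obtain ⟨a, rfl⟩ := Submodule.mem_span_singleton.mp hz
  simp [map_add, map_smul, hfix y hy, hv]

lemma eq_one_of_translate [CharZero K] {g : (V →ₗ[K] V)ˣ} {H : Submodule K V} {v : V}
    (htop : H ⊔ (K ∙ v) = ⊤) (hord : IsOfFinOrder g)
    (hfix : ∀ x ∈ H, (g : V →ₗ[K] V) x = x)
    (hv : (g : V →ₗ[K] V) v - v ∈ H) : g = 1 := by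
  obtain ⟨n, hn, hgn⟩ := hord.exists_pow_eq_one
  set h := (g : V →ₗ[K] V) v - v with hh
  have key : ∀ k : ℕ, ((g : V →ₗ[K] V) ^ k) v = v + (k : K) • h := by
    intro k
    induction k with
    | zero => simp
    | succ k ih =>
      have hgv : (g : V →ₗ[K] V) v = v + h := by rw [hh]; abel
      rw [pow_succ', Module.End.mul_apply, ih, map_add, map_smul, hfix h hv, hgv]
      push_cast
      module
  have h1 : ((g : V →ₗ[K] V) ^ n) v = v := by
    have : ((g ^ n : (V →ₗ[K] V)ˣ) : V →ₗ[K] V) v = v := by rw [hgn]; rfl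
    rwa [Units.val_pow_eq_pow_val] at this
  rw [key n] at h1
  have hzero : (n : K) • h = 0 := by
    have := h1
    linear_combination (norm := abel) this
  have hne : (n : K) ≠ 0 := Nat.cast_ne_zero.mpr hn.ne'
  have h0 : h = 0 := by
    rcases smul_eq_zero.mp hzero with h' | h'
    · exact absurd h' hne
    · exact h'
  have hgv : (g : V →ₗ[K] V) v = v := by
    have := hh
    rw [h0] at this
    linear_combination (norm := abel) -this
  exact eq_one_of_fixes htop hfix hgv

lemma reflectingHyperplanes_finite {W : Subgroup (V →ₗ[K] V)ˣ} [Finite W] :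
    (reflectingHyperplanes W).Finite := by
  have hsub : reflectingHyperplanes W ⊆
      Set.range (fun g : W =>
        LinearMap.ker (((g : (V →ₗ[K] V)ˣ) : V →ₗ[K] V) - LinearMap.id)) := by
    rintro H ⟨g, hgW, -, hker⟩
    exact ⟨⟨g, hgW⟩, hker⟩
  exact (Set.finite_range _).subset hsub

lemma exists_smul_of_ker_eq' [FiniteDimensional K V] {f g : V →ₗ[K] K}
    (hker : LinearMap.ker f = LinearMap.ker g)
    (hrk : Module.finrank K (LinearMap.ker g) + 1 = Module.finrank K V) :
    ∃ c : K, ∀ x, f x = c * g x := by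
  have hne : LinearMap.ker g ≠ ⊤ := by
    intro h; rw [h, finrank_top] at hrk; omega
  obtain ⟨v, hv⟩ : ∃ v, v ∉ LinearMap.ker g := by
    by_contra h; push_neg at h; exact hne (Submodule.eq_top_iff'.mpr h)
  have htop := sup_span_eq_top hrk hv
  have hgv : g v ≠ 0 := fun h0 => hv (LinearMap.mem_ker.mpr h0)
  refine ⟨f v / g v, fun x => ?_⟩
  have hx : x ∈ LinearMap.ker g ⊔ (K ∙ v) := htop ▸ Submodule.mem_top
  obtain ⟨y, hy, z, hz, rfl⟩ := Submodule.mem_sup.mp hx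
  obtain ⟨a, rfl⟩ := Submodule.mem_span_singleton.mp hz
  have hfy : f y = 0 := by rw [← LinearMap.mem_ker, hker]; exact hy
  have hgy : g y = 0 := LinearMap.mem_ker.mp hy
  rw [map_add, map_add, map_smul, map_smul, hfy, hgy]
  simp only [smul_eq_mul, zero_add]
  field_simp

lemma phi_inv_apply {φ : (V →ₗ[K] V)ˣ} (y : V) :
    (φ : V →ₗ[K] V) (((φ⁻¹ : (V →ₗ[K] V)ˣ) : V →ₗ[K] V) y) = y := by
  exact congrArg (fun f : V →ₗ[K] V => f y) (congrArg Units.val (mul_inv_cancel φ))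

lemma inv_phi_apply {φ : (V →ₗ[K] V)ˣ} (y : V) :
    ((φ⁻¹ : (V →ₗ[K] V)ˣ) : V →ₗ[K] V) ((φ : V →ₗ[K] V) y) = y := by
  exact congrArg (fun f : V →ₗ[K] V => f y) (congrArg Units.val (inv_mul_cancel φ))

lemma comap_mem_reflectingHyperplanes [FiniteDimensional K V]
    {W : Subgroup (V →ₗ[K] V)ˣ} {φ : (V →ₗ[K] V)ˣ}
    (hφW : ∀ g : (V →ₗ[K] V)ˣ, φ * g * φ⁻¹ ∈ W ↔ g ∈ W)
    {H : Submodule K V} (hH : H ∈ reflectingHyperplanes W) :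
    Submodule.comap (φ : V →ₗ[K] V) H ∈ reflectingHyperplanes W := by
  obtain ⟨g, hgW, ⟨hord, hrk⟩, hker⟩ := hH
  have hker' : LinearMap.ker (((φ⁻¹ * g * φ : (V →ₗ[K] V)ˣ) : V →ₗ[K] V) - LinearMap.id)
      = Submodule.comap (φ : V →ₗ[K] V)
        (LinearMap.ker ((g : V →ₗ[K] V) - LinearMap.id)) := by
    ext x
    simp only [LinearMap.mem_ker, Submodule.mem_comap, LinearMap.sub_apply,
      LinearMap.id_apply]
    have happ : ((φ⁻¹ * g * φ : (V →ₗ[K] V)ˣ) : V →ₗ[K] V) x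
        = ((φ⁻¹ : (V →ₗ[K] V)ˣ) : V →ₗ[K] V)
            ((g : V →ₗ[K] V) ((φ : V →ₗ[K] V) x)) := rfl
    rw [happ]
    constructor
    · intro hx
      have h1 : ((φ⁻¹ : (V →ₗ[K] V)ˣ) : V →ₗ[K] V)
          ((g : V →ₗ[K] V) ((φ : V →ₗ[K] V) x)) = x := by
        rwa [sub_eq_zero] at hx
      have h2 := congrArg (φ : V →ₗ[K] V) h1
      rw [phi_inv_apply] at h2
      rw [sub_eq_zero]
      exact h2
    · intro hx
      have h1 : (g : V →ₗ[K] V) ((φ : V →ₗ[K] V) x) = (φ : V →ₗ[K] V) x := by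
        rwa [sub_eq_zero] at hx
      rw [h1, inv_phi_apply, sub_self]
  have hfr : Module.finrank K (Submodule.comap (φ : V →ₗ[K] V) H)
      = Module.finrank K H := by
    rw [← LinearMap.GeneralLinearGroup.generalLinearEquiv_to_linearMap (R := K) (M := V) φ,
      Submodule.comap_equiv_eq_map_symm]
    exact LinearEquiv.finrank_map_eq _ _
  refine ⟨φ⁻¹ * g * φ, ?_, ⟨?_, ?_⟩, ?_⟩
  · apply (hφW _).mp
    have h : φ * (φ⁻¹ * g * φ) * φ⁻¹ = g := by group
    rw [h]; exact hgW
  · have hiso : φ⁻¹ * g * φ = (MulAut.conj φ⁻¹) g := by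
      simp [MulAut.conj_apply]
    rw [hiso]
    exact (MulAut.conj φ⁻¹).toMonoidHom.isOfFinOrder hord
  · rw [hker', hker, hfr]
    rw [hker] at hrk
    exact hrk
  · rw [hker', hker]

end Aux

section Aux2

variable {K : Type*} [Field K] [LinearOrder K] [IsStrictOrderedRing K] {V : Type*} [AddCommGroup V] [Module K V]

lemma stab_structure [FiniteDimensional K V] {H : Submodule K V} {v : V}
    (htop : H ⊔ (K ∙ v) = ⊤) (hv : v ∉ H)
    {g : (V →ₗ[K] V)ˣ} (hord : IsOfFinOrder g)
    (hfix : ∀ x ∈ H, (g : V →ₗ[K] V) x = x) :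
    g = 1 ∨ ((g : V →ₗ[K] V) v + v ∈ H ∧ g * g = 1) := by
  have hgv : (g : V →ₗ[K] V) v ∈ H ⊔ (K ∙ v) := htop ▸ Submodule.mem_top
  obtain ⟨h, hh, z, hz, hdec⟩ := Submodule.mem_sup.mp hgv
  obtain ⟨c, rfl⟩ := Submodule.mem_span_singleton.mp hz
  obtain ⟨n, hn, hgn⟩ := hord.exists_pow_eq_one
  have key : ∀ k : ℕ, ((g : V →ₗ[K] V) ^ k) v
      = (∑ i ∈ Finset.range k, c ^ i) • h + c ^ k • v := by
    intro k
    induction k with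
    | zero => simp
    | succ k ih =>
      rw [pow_succ', Module.End.mul_apply, ih, map_add, map_smul, map_smul,
        hfix h hh, ← hdec]
      rw [Finset.sum_range_succ, pow_succ]
      module
  have h1 : ((g : V →ₗ[K] V) ^ n) v = v := by
    have : ((g ^ n : (V →ₗ[K] V)ˣ) : V →ₗ[K] V) v = v := by rw [hgn]; rfl
    rwa [Units.val_pow_eq_pow_val] at this
  rw [key n] at h1
  have hcn : c ^ n = 1 := by
    by_contra hc
    apply hv
    have hv' : (c ^ n - 1) • v ∈ H := by
      have heq : (c ^ n - 1) • v = -((∑ i ∈ Finset.range n, c ^ i) • h) := by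
        linear_combination (norm := module) h1
      rw [heq]
      exact neg_mem (Submodule.smul_mem _ _ hh)
    have := Submodule.smul_mem H (c ^ n - 1)⁻¹ hv'
    rwa [inv_smul_smul₀ (sub_ne_zero.mpr hc)] at this
  rcases (pow_eq_one_iff_of_ne_zero hn.ne').mp hcn with hc1 | ⟨hc1, -⟩
  · left
    refine eq_one_of_translate htop hord hfix ?_
    have heq : (g : V →ₗ[K] V) v - v = h := by
      rw [← hdec, hc1]; module
    rwa [heq]
  · right
    constructor
    · have heq : (g : V →ₗ[K] V) v + v = h := by rw [← hdec, hc1]; module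
      rwa [heq]
    · refine eq_one_of_fixes htop (fun x hx => ?_) ?_
      · have heq : ((g * g : (V →ₗ[K] V)ˣ) : V →ₗ[K] V) x
            = (g : V →ₗ[K] V) ((g : V →ₗ[K] V) x) := rfl
        rw [heq, hfix x hx, hfix x hx]
      · have h2 : ((g * g : (V →ₗ[K] V)ˣ) : V →ₗ[K] V) v
            = (g : V →ₗ[K] V) ((g : V →ₗ[K] V) v) := rfl
        rw [h2, ← hdec, hc1, map_add, map_smul, hfix h hh, ← hdec, hc1]
        module

lemma mem_S_finrank {W : Subgroup (V →ₗ[K] V)ˣ} {H : Submodule K V}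
    (hH : H ∈ reflectingHyperplanes W) :
    Module.finrank K H + 1 = Module.finrank K V := by
  obtain ⟨g, -, ⟨-, hg⟩, hker⟩ := hH
  rwa [hker] at hg

lemma orderH_eq_two [FiniteDimensional K V] {W : Subgroup (V →ₗ[K] V)ˣ} [Finite W]
    {H : Submodule K V} (hH : H ∈ reflectingHyperplanes W) :
    orderH W H = 2 := by
  have hHrk := mem_S_finrank hH
  obtain ⟨r, hrW, ⟨hrord, hrrk⟩, hrker⟩ := hH
  have hfixr : ∀ x ∈ H, (r : V →ₗ[K] V) x = x := fix_of_ker hrker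
  have hHne : H ≠ ⊤ := by
    intro h
    rw [h, finrank_top] at hHrk
    omega
  obtain ⟨v, hv⟩ : ∃ v, v ∉ H := by
    by_contra h
    push_neg at h
    exact hHne (Submodule.eq_top_iff'.mpr h)
  have htop := sup_span_eq_top hHrk hv
  have hrne : r ≠ 1 := by
    intro h
    apply hHne
    rw [← hrker, h]
    have h0 : ((1 : (V →ₗ[K] V)ˣ) : V →ₗ[K] V) - LinearMap.id = 0 := by
      ext x; simp
    rw [h0, LinearMap.ker_zero]
  rcases stab_structure htop hv hrord hfixr with h | ⟨hrv, hr2⟩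
  · exact absurd h hrne
  have hsets : {g : (V →ₗ[K] V)ˣ | g ∈ W ∧ ∀ x ∈ H, (g : V →ₗ[K] V) x = x} = {1, r} := by
    ext g
    simp only [Set.mem_setOf_eq, Set.mem_insert_iff, Set.mem_singleton_iff]
    constructor
    · rintro ⟨hgW, hfixg⟩
      rcases stab_structure htop hv (finOrder_of_mem hgW) hfixg with h | ⟨hgv, hg2⟩
      · exact Or.inl h
      · right
        have hgr : g * r = 1 := by
          refine eq_one_of_translate htop (finOrder_of_mem (mul_mem hgW hrW))
            (fun x hx => ?_) ?_
          · have heq : ((g * r : (V →ₗ[K] V)ˣ) : V →ₗ[K] V) x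
                = (g : V →ₗ[K] V) ((r : V →ₗ[K] V) x) := rfl
            rw [heq, hfixr x hx, hfixg x hx]
          · have heq : ((g * r : (V →ₗ[K] V)ˣ) : V →ₗ[K] V) v
                = (g : V →ₗ[K] V) ((r : V →ₗ[K] V) v) := rfl
            have hcalc : ((g * r : (V →ₗ[K] V)ˣ) : V →ₗ[K] V) v - v
                = ((r : V →ₗ[K] V) v + v) - ((g : V →ₗ[K] V) v + v) := by
              rw [heq]
              have hr' : (r : V →ₗ[K] V) v = ((r : V →ₗ[K] V) v + v) - v := by abel
              rw [hr', map_sub, hfixg _ hrv]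
              abel
            rw [hcalc]
            exact sub_mem hrv hgv
        calc g = g * (r * r) := by rw [hr2, mul_one]
          _ = (g * r) * r := by rw [mul_assoc]
          _ = r := by rw [hgr, one_mul]
    · rintro (rfl | rfl)
      · exact ⟨one_mem W, fun x hx => rfl⟩
      · exact ⟨hrW, hfixr⟩
  have hn2 : {g : (V →ₗ[K] V)ˣ | g ∈ W ∧ ∀ x ∈ H, (g : V →ₗ[K] V) x = x}.ncard = 2 := by
    rw [hsets]
    exact Set.ncard_pair (Ne.symm hrne)
  rw [← Nat.card_coe_set_eq] at hn2
  exact hn2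

end Aux2

/-- For a reflection coset over a subfield `K` of `ℝ`, the automorphism `φ` fixes the
discriminant `Disc = ∏_H α_H ^ e_H` of `W`; equivalently, the root of unity by which `φ`
rescales `Disc` equals `1`. -/
theorem statement2 (K : Subfield ℝ) {V : Type*} [AddCommGroup V] [Module K V]
    [FiniteDimensional K V] (hV : 0 < Module.finrank K V)
    (W : Subgroup (V →ₗ[K] V)ˣ) [Finite W] (hgen : GeneratedByReflections W)
    (φ : (V →ₗ[K] V)ˣ) (hφ : IsOfFinOrder φ)
    (hφW : ∀ g : (V →ₗ[K] V)ˣ, φ * g * φ⁻¹ ∈ W ↔ g ∈ W)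
    (α : Submodule K V → (V →ₗ[K] K))
    (hα : ∀ H ∈ reflectingHyperplanes W, LinearMap.ker (α H) = H) :
    ∀ x : V,
      (∏ᶠ H ∈ reflectingHyperplanes W, α H ((φ : V →ₗ[K] V) x) ^ orderH W H) =
        ∏ᶠ H ∈ reflectingHyperplanes W, α H x ^ orderH W H := by
  classical
  intro x
  set S := reflectingHyperplanes W with hSdef
  have hfin : S.Finite := reflectingHyperplanes_finite
  set s : Finset (Submodule K V) := hfin.toFinset with hsdef
  have hmem : ∀ H, H ∈ s ↔ H ∈ S := fun H => hfin.mem_toFinset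
  -- the permutation σ with inverse τ
  set σ := fun H : Submodule K V => Submodule.comap (φ : V →ₗ[K] V) H with hσdef
  set τ := fun H : Submodule K V =>
    Submodule.comap ((φ⁻¹ : (V →ₗ[K] V)ˣ) : V →ₗ[K] V) H with hτdef
  have hφW' : ∀ g : (V →ₗ[K] V)ˣ, φ⁻¹ * g * (φ⁻¹)⁻¹ ∈ W ↔ g ∈ W := by
    intro g
    have h1 : φ * (φ⁻¹ * g * (φ⁻¹)⁻¹) * φ⁻¹ = g := by group
    have := hφW (φ⁻¹ * g * (φ⁻¹)⁻¹)
    rw [h1] at this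
    exact this.symm
  have hσS : ∀ H ∈ S, σ H ∈ S := fun H hH => comap_mem_reflectingHyperplanes hφW hH
  have hτS : ∀ H ∈ S, τ H ∈ S := fun H hH => comap_mem_reflectingHyperplanes hφW' hH
  have hτσ : ∀ H : Submodule K V, τ (σ H) = H := by
    intro H
    rw [hσdef, hτdef]
    ext y
    simp only [Submodule.mem_comap]
    rw [phi_inv_apply]
  have hστ : ∀ H : Submodule K V, σ (τ H) = H := by
    intro H
    rw [hσdef, hτdef]
    ext y
    simp only [Submodule.mem_comap]
    rw [inv_phi_apply]
  -- scalar factors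
  have hc : ∀ H ∈ S, ∃ cc : K, ∀ y, α H ((φ : V →ₗ[K] V) y) = cc * α (σ H) y := by
    intro H hH
    have hkf : LinearMap.ker ((α H).comp (φ : V →ₗ[K] V)) = LinearMap.ker (α (σ H)) := by
      rw [LinearMap.ker_comp, hα H hH, hα _ (hσS H hH)]
    have hrk : Module.finrank K (LinearMap.ker (α (σ H))) + 1 = Module.finrank K V := by
      rw [hα _ (hσS H hH)]
      exact mem_S_finrank (hσS H hH)
    obtain ⟨cc, hcc⟩ := exists_smul_of_ker_eq' hkf hrk
    exact ⟨cc, fun y => hcc y⟩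
  choose! c hcspec using hc
  have hcne : ∀ H ∈ S, c H ≠ 0 := by
    intro H hH hc0
    have hrkH := mem_S_finrank hH
    have hHne : H ≠ ⊤ := by intro h; rw [h, finrank_top] at hrkH; omega
    obtain ⟨w, hw⟩ : ∃ w, w ∉ H := by
      by_contra h; push_neg at h; exact hHne (Submodule.eq_top_iff'.mpr h)
    have hαw : α H w ≠ 0 := fun h0 => hw (by rw [← hα H hH]; exact LinearMap.mem_ker.mpr h0)
    apply hαw
    have h1 := hcspec H hH (((φ⁻¹ : (V →ₗ[K] V)ˣ) : V →ₗ[K] V) w)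
    rw [phi_inv_apply] at h1
    rw [h1, hc0, zero_mul]
  -- discriminant
  set D := fun y : V => ∏ H ∈ s, (α H y) ^ 2 with hDdef
  set Δ := ∏ H ∈ s, (c H) ^ 2 with hΔdef
  have key : ∀ y, D ((φ : V →ₗ[K] V) y) = Δ * D y := by
    intro y
    have h1 : ∀ H ∈ s, (α H ((φ : V →ₗ[K] V) y)) ^ 2 = (c H) ^ 2 * (α (σ H) y) ^ 2 := by
      intro H hH
      rw [hcspec H ((hmem H).mp hH) y]; ring
    rw [hDdef]
    simp only
    rw [Finset.prod_congr rfl h1, Finset.prod_mul_distrib]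
    congr 1
    refine Finset.prod_nbij' σ τ ?_ ?_ ?_ ?_ ?_
    · intro H hH; exact (hmem _).mpr (hσS H ((hmem H).mp hH))
    · intro H hH; exact (hmem _).mpr (hτS H ((hmem H).mp hH))
    · intro H hH; exact hτσ H
    · intro H hH; exact hστ H
    · intro H hH; rfl
  have keyiter : ∀ (k : ℕ) (y : V), D (((φ : V →ₗ[K] V) ^ k) y) = Δ ^ k * D y := by
    intro k
    induction k with
    | zero => intro y; simp
    | succ k ih =>
      intro y
      rw [pow_succ, Module.End.mul_apply, ih ((φ : V →ₗ[K] V) y), key y, pow_succ]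
      ring
  obtain ⟨n, hn, hφn⟩ := hφ.exists_pow_eq_one
  -- a point where D is nonzero
  obtain ⟨x0, hx0⟩ : ∃ x0 : V, ∀ H ∈ s, x0 ∉ H := by
    have htopn : (⊤ : Submodule K V) ∉ s := by
      intro h
      have := mem_S_finrank ((hmem _).mp h)
      rw [finrank_top] at this
      omega
    have hne := Subspace.biUnion_ne_univ_of_top_notMem (k := K) (E := V) htopn
    rw [Set.ne_univ_iff_exists_notMem] at hne
    obtain ⟨x0, hx0⟩ := hne
    exact ⟨x0, fun H hH hx => hx0 (Set.mem_biUnion hH hx)⟩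
  have hD0 : D x0 ≠ 0 := by
    rw [hDdef]
    simp only
    rw [Finset.prod_ne_zero_iff]
    intro H hH
    exact pow_ne_zero _ (fun h0 => hx0 H hH
      (by rw [← hα H ((hmem H).mp hH)]; exact LinearMap.mem_ker.mpr h0))
  have hΔn : Δ ^ n = 1 := by
    have h1 : ((φ : V →ₗ[K] V) ^ n) x0 = x0 := by
      have h2 : ((φ ^ n : (V →ₗ[K] V)ˣ) : V →ₗ[K] V) x0 = x0 := by rw [hφn]; rfl
      rwa [Units.val_pow_eq_pow_val] at h2
    have h3 := keyiter n x0
    rw [h1] at h3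
    have h4 : Δ ^ n * D x0 = 1 * D x0 := by rw [← h3, one_mul]
    exact mul_right_cancel₀ hD0 h4
  have hΔpos : 0 < Δ := by
    rw [hΔdef]
    exact Finset.prod_pos (fun H hH => pow_two_pos_of_ne_zero (hcne H ((hmem H).mp hH)))
  have hΔ1 : Δ = 1 := by
    rcases lt_trichotomy Δ 1 with h | h | h
    · exfalso
      have := pow_lt_one₀ hΔpos.le h hn.ne'
      rw [hΔn] at this
      exact lt_irrefl _ this
    · exact h
    · exfalso
      have := one_lt_pow₀ h hn.ne'
      rw [hΔn] at this
      exact lt_irrefl _ this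
  have hgoal : ∀ y : V, (∏ᶠ H ∈ S, α H y ^ orderH W H) = D y := by
    intro y
    have hSc : S = ↑s := hfin.coe_toFinset.symm
    calc (∏ᶠ H ∈ S, α H y ^ orderH W H)
        = ∏ᶠ H ∈ (↑s : Set (Submodule K V)), α H y ^ 2 :=
          finprod_mem_congr hSc (fun H hH => by
            rw [orderH_eq_two ((hmem H).mp (Finset.mem_coe.mp hH))])
      _ = ∏ H ∈ s, α H y ^ 2 := finprod_mem_coe_finset _ s
      _ = D y := rfl
  rw [hgoal ((φ : V →ₗ[K] V) x), hgoal x, key x, hΔ1, one_mul]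


end Stmt2
end

section
/- Let G be a finite group, N a normal subgroup of G, and g ∈ G such that G is generated by N together with g (so G/N is cyclic, generated by the image of g). Let ψ and ψ' be characters of irreducible complex representations of G whose restrictions to N are irreducible. Then: (1) (1/|N|)·Σ_{n∈N} ψ(ng)·conj(ψ(ng)) = 1; and (2) if the restrictions of ψ and ψ' to N are distinct, then (1/|N|)·Σ_{n∈N} ψ(ng)·conj(ψ'(ng)) = 0. (In other words, the restrictions to the coset Ng of extensions of φ-stable irreducible characters of N have norm 1, and those attached to distinct irreducible characters of N are orthogonal.) -/
open LinearMap TensorProduct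
open scoped Matrix

/-- For a representation of a finite group over `ℂ`, the character value at `x⁻¹` is the
complex conjugate of the character value at `x`. -/
lemma aux_char_inv_conj {G : Type*} [Group G] [Finite G]
    {V : Type*} [AddCommGroup V] [Module ℂ V] [FiniteDimensional ℂ V]
    (ρ : Representation ℂ G V) (x : G) :
    LinearMap.trace ℂ V (ρ x⁻¹) = (starRingEnd ℂ) (LinearMap.trace ℂ V (ρ x)) := by
  classical
  haveI := Fintype.ofFinite G
  set b := Module.finBasis ℂ V with hb
  set M : G → Matrix (Fin (Module.finrank ℂ V)) (Fin (Module.finrank ℂ V)) ℂ :=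
    fun y => LinearMap.toMatrixAlgEquiv b (ρ y) with hMdef
  have hmul : ∀ y z, M (y * z) = M y * M z := by
    intro y z; simp [hMdef, map_mul]
  have hone : M 1 = 1 := by simp [hMdef]
  set H : Matrix (Fin (Module.finrank ℂ V)) (Fin (Module.finrank ℂ V)) ℂ :=
    ∑ y : G, (M y)ᴴ * (M y) with hHdef
  -- invariance
  have hinv : ∀ z : G, (M z)ᴴ * H * (M z) = H := by
    intro z
    rw [hHdef, Finset.mul_sum, Finset.sum_mul]
    refine Fintype.sum_bijective (· * z) (Group.mulRight_bijective z) _ _ ?_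
    intro y
    rw [hmul, Matrix.conjTranspose_mul]
    noncomm_ring
  have hdot : ∀ (w : Fin (Module.finrank ℂ V) → ℂ),
      star w ⬝ᵥ w = ((∑ i, Complex.normSq (w i) : ℝ) : ℂ) := by
    intro w
    push_cast
    simp [dotProduct, mul_comm, Complex.mul_conj]
  -- H has nonzero determinant
  have hdet : IsUnit H.det := by
    rw [isUnit_iff_ne_zero]
    intro h0
    obtain ⟨v, hv, hHv⟩ := (Matrix.exists_mulVec_eq_zero_iff).2 h0
    have hs : H *ᵥ v = ∑ y : G, (M y)ᴴ *ᵥ (M y *ᵥ v) := by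
      rw [hHdef]
      simpa only [AddMonoidHom.mk'_apply, Matrix.mulVec_mulVec] using
        map_sum (AddMonoidHom.mk' (fun A : Matrix (Fin (Module.finrank ℂ V))
          (Fin (Module.finrank ℂ V)) ℂ => A *ᵥ v) (fun A B => Matrix.add_mulVec A B v))
          (fun y => (M y)ᴴ * M y) Finset.univ
    have hterm : ∀ y : G, star v ⬝ᵥ ((M y)ᴴ *ᵥ (M y *ᵥ v)) =
        ∑ i, (Complex.normSq ((M y *ᵥ v) i) : ℂ) := by
      intro y
      rw [Matrix.dotProduct_mulVec, ← Matrix.star_mulVec, hdot]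
      push_cast
      rfl
    have hsum : ((∑ y : G, ∑ i, Complex.normSq ((M y *ᵥ v) i) : ℝ) : ℂ) = 0 := by
      have h1 : star v ⬝ᵥ (H *ᵥ v) = 0 := by rw [hHv, dotProduct_zero]
      rw [hs] at h1
      have h2 : star v ⬝ᵥ ∑ y : G, ((M y)ᴴ *ᵥ (M y *ᵥ v)) =
          ∑ y : G, star v ⬝ᵥ ((M y)ᴴ *ᵥ (M y *ᵥ v)) := by
        simp only [dotProduct, Finset.sum_apply, Finset.mul_sum]
        exact Finset.sum_comm
      rw [h2] at h1
      rw [← h1]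
      push_cast
      exact Finset.sum_congr rfl fun y _ => (hterm y).symm
    have hreal : ∀ y : G, ∀ i, Complex.normSq ((M y *ᵥ v) i) = 0 := by
      have h2 : (∑ y : G, ∑ i, Complex.normSq ((M y *ᵥ v) i) : ℝ) = 0 := by
        exact_mod_cast hsum
      intro y i
      have := (Finset.sum_eq_zero_iff_of_nonneg (fun y _ =>
        Finset.sum_nonneg fun i _ => Complex.normSq_nonneg _)).1 h2 y (Finset.mem_univ y)
      exact (Finset.sum_eq_zero_iff_of_nonneg (fun i _ => Complex.normSq_nonneg _)).1
        this i (Finset.mem_univ i)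
    apply hv
    funext i
    have := hreal 1 i
    rw [hone, Matrix.one_mulVec] at this
    simpa using (Complex.normSq_eq_zero.1 this)
  -- conclude
  have hMx : M x⁻¹ = (M x)⁻¹ := by
    refine (Matrix.inv_eq_left_inv ?_).symm
    rw [← hmul, inv_mul_cancel, hone]
  have hkey : (M x)ᴴ * H = H * (M x)⁻¹ := by
    have := hinv x
    calc (M x)ᴴ * H = (M x)ᴴ * H * ((M x) * (M x)⁻¹) := by
          rw [Matrix.mul_nonsing_inv _ (by
            have : IsUnit (M x).det := by
              have h1 : M x * M x⁻¹ = 1 := by rw [← hmul, mul_inv_cancel, hone]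
              exact Matrix.isUnit_det_of_right_inverse h1
            exact this), Matrix.mul_one]
      _ = ((M x)ᴴ * H * (M x)) * (M x)⁻¹ := by noncomm_ring
      _ = H * (M x)⁻¹ := by rw [hinv x]
  have htr : (M x⁻¹).trace = ((M x)ᴴ).trace := by
    rw [hMx]
    calc ((M x)⁻¹).trace = (H⁻¹ * (H * (M x)⁻¹)).trace := by
          rw [← Matrix.mul_assoc, Matrix.nonsing_inv_mul _ hdet, Matrix.one_mul]
      _ = (H⁻¹ * ((M x)ᴴ * H)).trace := by rw [hkey]
      _ = (((M x)ᴴ * H) * H⁻¹).trace := by rw [Matrix.trace_mul_comm]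
      _ = ((M x)ᴴ).trace := by
          rw [Matrix.mul_assoc, Matrix.mul_nonsing_inv _ hdet, Matrix.mul_one]
  have htrace : ∀ y : G, LinearMap.trace ℂ V (ρ y) = (M y).trace := by
    intro y
    rw [LinearMap.trace_eq_matrix_trace ℂ b]
    rfl
  rw [htrace, htrace, htr, Matrix.trace_conjTranspose]
  rfl

lemma aux_trace_linHom {G : Type*} [Group G]
    {V₁ : Type*} [AddCommGroup V₁] [Module ℂ V₁] [FiniteDimensional ℂ V₁]
    {V₂ : Type*} [AddCommGroup V₂] [Module ℂ V₂] [FiniteDimensional ℂ V₂]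
    (ρ₁ : Representation ℂ G V₁) (ρ₂ : Representation ℂ G V₂) (x : G) :
    LinearMap.trace ℂ (V₂ →ₗ[ℂ] V₁) (Representation.linHom ρ₂ ρ₁ x) =
      LinearMap.trace ℂ V₁ (ρ₁ x) * LinearMap.trace ℂ V₂ (ρ₂ x⁻¹) := by
  let e : Module.Dual ℂ V₂ ⊗[ℂ] V₁ ≃ₗ[ℂ] (V₂ →ₗ[ℂ] V₁) := dualTensorHomEquiv ℂ V₂ V₁
  have he : (e : Module.Dual ℂ V₂ ⊗[ℂ] V₁ →ₗ[ℂ] (V₂ →ₗ[ℂ] V₁)) = dualTensorHom ℂ V₂ V₁ := rfl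
  have hcomm : e.conj (TensorProduct.map (ρ₂.dual x) (ρ₁ x)) =
      Representation.linHom ρ₂ ρ₁ x := by
    rw [LinearEquiv.conj_apply, he,
      Representation.dualTensorHom_comm ρ₂ ρ₁ x, ← he, LinearMap.comp_assoc,
      LinearEquiv.comp_coe, LinearEquiv.symm_trans_self, LinearEquiv.refl_toLinearMap,
      LinearMap.comp_id]
  rw [← hcomm, LinearMap.trace_conj', LinearMap.trace_tensorProduct',
    Representation.dual_apply, LinearMap.trace_transpose']
  ring

lemma aux_schur_zero {G : Type*} [Group G] (N : Subgroup G)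
    {V₁ : Type*} [AddCommGroup V₁] [Module ℂ V₁] [FiniteDimensional ℂ V₁]
    {V₂ : Type*} [AddCommGroup V₂] [Module ℂ V₂] [FiniteDimensional ℂ V₂]
    (ρ₁ : Representation ℂ G V₁) (ρ₂ : Representation ℂ G V₂)
    (hirrN₁ : ∀ p : Submodule ℂ V₁, (∀ x ∈ N, ∀ v ∈ p, ρ₁ x v ∈ p) → p = ⊥ ∨ p = ⊤)
    (hirrN₂ : ∀ p : Submodule ℂ V₂, (∀ x ∈ N, ∀ v ∈ p, ρ₂ x v ∈ p) → p = ⊥ ∨ p = ⊤)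
    (hne : ∃ n ∈ N, LinearMap.trace ℂ V₁ (ρ₁ n) ≠ LinearMap.trace ℂ V₂ (ρ₂ n))
    (T : V₂ →ₗ[ℂ] V₁) (hT : ∀ m ∈ N, ρ₁ m ∘ₗ T = T ∘ₗ ρ₂ m) : T = 0 := by
  have hker : ∀ x ∈ N, ∀ v ∈ LinearMap.ker T, ρ₂ x v ∈ LinearMap.ker T := by
    intro x hx v hv
    rw [LinearMap.mem_ker] at hv ⊢
    have := congrArg (fun L => L v) (hT x hx)
    simp only [LinearMap.comp_apply] at this
    rw [← this, hv, map_zero]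
  have hrange : ∀ x ∈ N, ∀ v ∈ LinearMap.range T, ρ₁ x v ∈ LinearMap.range T := by
    intro x hx v hv
    obtain ⟨w, rfl⟩ := hv
    have := congrArg (fun L => L w) (hT x hx)
    simp only [LinearMap.comp_apply] at this
    exact ⟨ρ₂ x w, this.symm⟩
  rcases hirrN₂ _ hker with hk | hk
  swap
  · exact LinearMap.ker_eq_top.1 hk
  rcases hirrN₁ _ hrange with hr | hr
  · exact LinearMap.range_eq_bot.1 hr
  -- T is bijective, contradiction with hne
  exfalso
  obtain ⟨n, hn, hne'⟩ := hne
  apply hne'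
  have hinj : Function.Injective T := LinearMap.ker_eq_bot.1 hk
  have hsurj : Function.Surjective T := LinearMap.range_eq_top.1 hr
  let e : V₂ ≃ₗ[ℂ] V₁ := LinearEquiv.ofBijective T ⟨hinj, hsurj⟩
  have hconj : e.conj (ρ₂ n) = ρ₁ n := by
    ext v
    obtain ⟨w, rfl⟩ := hsurj v
    have h2 := congrArg (fun L => L w) (hT n hn)
    simp only [LinearMap.comp_apply] at h2
    have h1 : e.conj (ρ₂ n) (T w) = e ((ρ₂ n) (e.symm (e w))) := rfl
    rw [h1, e.symm_apply_apply]
    exact h2.symm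
  rw [← hconj, LinearMap.trace_conj']

lemma aux_schur_scalar {G : Type*} [Group G] (N : Subgroup G)
    {V₁ : Type*} [AddCommGroup V₁] [Module ℂ V₁] [FiniteDimensional ℂ V₁] [Nontrivial V₁]
    (ρ₁ : Representation ℂ G V₁)
    (hirrN₁ : ∀ p : Submodule ℂ V₁, (∀ x ∈ N, ∀ v ∈ p, ρ₁ x v ∈ p) → p = ⊥ ∨ p = ⊤)
    (T : V₁ →ₗ[ℂ] V₁) (hT : ∀ m ∈ N, ρ₁ m ∘ₗ T = T ∘ₗ ρ₁ m) :
    ∃ μ : ℂ, T = μ • LinearMap.id := by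
  obtain ⟨μ, hμ⟩ := Module.End.exists_eigenvalue (T : Module.End ℂ V₁)
  refine ⟨μ, ?_⟩
  have hinv : ∀ x ∈ N, ∀ v ∈ Module.End.eigenspace T μ, ρ₁ x v ∈ Module.End.eigenspace T μ := by
    intro x hx v hv
    rw [Module.End.mem_eigenspace_iff] at hv ⊢
    have := congrArg (fun L => L v) (hT x hx)
    simp only [LinearMap.comp_apply] at this
    rw [← this, hv, map_smul]
  rcases hirrN₁ _ hinv with h | h
  · exact absurd h hμ
  · ext v
    have hv : v ∈ Module.End.eigenspace T μ := h ▸ Submodule.mem_top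
    rw [Module.End.mem_eigenspace_iff] at hv
    simpa using hv

lemma aux_finsum_subgroup {G : Type*} [Group G] [Fintype G] (N : Subgroup G) [Fintype ↥N]
    (F : G → ℂ) : ∑ᶠ n ∈ N, F n = ∑ n : ↥N, F ↑n := by
  classical
  rw [show (∑ᶠ n ∈ N, F n) = ∑ᶠ n ∈ (N : Set G), F n from rfl,
    ← Set.coe_toFinset (N : Set G), finsum_mem_coe_finset]
  exact Finset.sum_subtype _ (fun x => Set.mem_toFinset) F

section Key

variable {G : Type*} [Group G] [Finite G] (N : Subgroup G) (g : G)
    {V₁ : Type*} [AddCommGroup V₁] [Module ℂ V₁] [FiniteDimensional ℂ V₁]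
    {V₂ : Type*} [AddCommGroup V₂] [Module ℂ V₂] [FiniteDimensional ℂ V₂]
    (ρ₁ : Representation ℂ G V₁) (ρ₂ : Representation ℂ G V₂)

set_option linter.unusedSectionVars false

/-- Values of the averaged endomorphism of `Hom(V₂, V₁)` over the coset `Ng` are
`N`-intertwiners. -/
lemma aux_S_intertwines [Fintype G] [Fintype ↥N]
    (f : V₂ →ₗ[ℂ] V₁) (m : G) (hm : m ∈ N) :
    ρ₁ m ∘ₗ ((∑ n : ↥N, Representation.linHom ρ₂ ρ₁ ((n : G) * g)) f)
      = ((∑ n : ↥N, Representation.linHom ρ₂ ρ₁ ((n : G) * g)) f) ∘ₗ ρ₂ m := by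
  set π := Representation.linHom ρ₂ ρ₁ with hπ
  set S : Module.End ℂ (V₂ →ₗ[ℂ] V₁) := ∑ n : ↥N, π ((n : G) * g) with hSdef
  have hmulS : π m * S = S := by
    rw [hSdef, Finset.mul_sum]
    refine Fintype.sum_bijective (fun n => (⟨m, hm⟩ : ↥N) * n)
      (Group.mulLeft_bijective _) _ _ fun n => ?_
    rw [← map_mul, Subgroup.coe_mul, mul_assoc]
  have h1 : π m (S f) = S f := by
    have := congrArg (fun L => L f) hmulS
    simpa [Module.End.mul_apply] using this
  rw [Representation.linHom_apply] at h1
  ext v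
  have h2 := congrArg (fun L => L (ρ₂ m v)) h1
  simp only [LinearMap.comp_apply] at h2
  have h3 : ρ₂ m⁻¹ (ρ₂ m v) = v := by
    rw [← Module.End.mul_apply, ← map_mul, inv_mul_cancel, map_one, Module.End.one_apply]
  rw [h3] at h2
  simpa [LinearMap.comp_apply] using h2

/-- Orthogonality on the coset `Ng` of characters restricting to distinct irreducible
characters of `N`. -/
lemma aux_orth [Fintype G] [Fintype ↥N]
    (hirrN₁ : ∀ p : Submodule ℂ V₁, (∀ x ∈ N, ∀ v ∈ p, ρ₁ x v ∈ p) → p = ⊥ ∨ p = ⊤)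
    (hirrN₂ : ∀ p : Submodule ℂ V₂, (∀ x ∈ N, ∀ v ∈ p, ρ₂ x v ∈ p) → p = ⊥ ∨ p = ⊤)
    (hne : ∃ n ∈ N, LinearMap.trace ℂ V₁ (ρ₁ n) ≠ LinearMap.trace ℂ V₂ (ρ₂ n)) :
    ∑ᶠ n ∈ N, LinearMap.trace ℂ V₁ (ρ₁ (n * g)) *
      (starRingEnd ℂ) (LinearMap.trace ℂ V₂ (ρ₂ (n * g))) = 0 := by
  rw [aux_finsum_subgroup]
  have hS0 : (∑ n : ↥N, Representation.linHom ρ₂ ρ₁ ((n : G) * g))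
      = (0 : Module.End ℂ (V₂ →ₗ[ℂ] V₁)) := by
    apply LinearMap.ext
    intro f
    rw [LinearMap.zero_apply]
    exact aux_schur_zero N ρ₁ ρ₂ hirrN₁ hirrN₂ hne _
      (fun m hm => aux_S_intertwines N g ρ₁ ρ₂ f m hm)
  have htr := congrArg (LinearMap.trace ℂ (V₂ →ₗ[ℂ] V₁)) hS0
  rw [map_zero, map_sum] at htr
  rw [← htr]
  refine Finset.sum_congr rfl fun n _ => ?_
  rw [aux_trace_linHom, aux_char_inv_conj]

/-- The restriction to the coset `Ng` of a character restricting irreducibly to `N` has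
norm one. -/
lemma aux_norm [Fintype G] [Fintype ↥N] [Nontrivial V₁]
    (hirrN₁ : ∀ p : Submodule ℂ V₁, (∀ x ∈ N, ∀ v ∈ p, ρ₁ x v ∈ p) → p = ⊥ ∨ p = ⊤) :
    (Nat.card ↥N : ℂ)⁻¹ * ∑ᶠ n ∈ N, LinearMap.trace ℂ V₁ (ρ₁ (n * g)) *
      (starRingEnd ℂ) (LinearMap.trace ℂ V₁ (ρ₁ (n * g))) = 1 := by
  classical
  set S : Module.End ℂ (V₁ →ₗ[ℂ] V₁) :=
    ∑ n : ↥N, Representation.linHom ρ₁ ρ₁ ((n : G) * g) with hSdef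
  set c : ℂ := (Nat.card ↥N : ℂ)⁻¹ with hcdef
  have hcard : (Nat.card ↥N : ℂ) ≠ 0 := by
    rw [Nat.card_eq_fintype_card]
    exact_mod_cast Fintype.card_ne_zero
  set P : Module.End ℂ (V₁ →ₗ[ℂ] V₁) := c • S with hPdef
  have hid_ne : (LinearMap.id : V₁ →ₗ[ℂ] V₁) ≠ 0 := by
    intro h
    obtain ⟨v, hv⟩ := exists_ne (0 : V₁)
    exact hv (by simpa using congrArg (fun L => L v) h)
  have hPid : P LinearMap.id = LinearMap.id := by
    have hone : ∀ n : ↥N,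
        Representation.linHom ρ₁ ρ₁ ((n : G) * g) LinearMap.id = LinearMap.id := by
      intro n
      rw [Representation.linHom_apply]
      ext v
      simp only [LinearMap.comp_apply, LinearMap.id_apply]
      rw [← Module.End.mul_apply, ← map_mul, mul_inv_cancel, map_one, Module.End.one_apply]
    rw [hPdef, LinearMap.smul_apply, hSdef, LinearMap.sum_apply]
    simp only [hone]
    rw [Finset.sum_const, Finset.card_univ, ← Nat.cast_smul_eq_nsmul ℂ, smul_smul, hcdef,
      Nat.card_eq_fintype_card, inv_mul_cancel₀ (by exact_mod_cast Fintype.card_ne_zero),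
      one_smul]
  have hrange : ∀ f : V₁ →ₗ[ℂ] V₁, ∃ μ : ℂ, S f = μ • LinearMap.id :=
    fun f => aux_schur_scalar N ρ₁ hirrN₁ (S f)
      (fun m hm => aux_S_intertwines N g ρ₁ ρ₁ f m hm)
  have hproj : LinearMap.IsProj
      (Submodule.span ℂ {(LinearMap.id : V₁ →ₗ[ℂ] V₁)}) P := by
    constructor
    · intro f
      obtain ⟨μ, hμ⟩ := hrange f
      rw [show P f = c • (S f) from rfl, hμ]
      exact Submodule.smul_mem _ _
        (Submodule.smul_mem _ _ (Submodule.mem_span_singleton_self _))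
    · intro f hf
      obtain ⟨a, ha⟩ := Submodule.mem_span_singleton.1 hf
      rw [← ha, map_smul, hPid]
  have htrace : LinearMap.trace ℂ (V₁ →ₗ[ℂ] V₁) P = 1 := by
    rw [hproj.trace, finrank_span_singleton hid_ne, Nat.cast_one]
  rw [aux_finsum_subgroup]
  calc c * ∑ n : ↥N, LinearMap.trace ℂ V₁ (ρ₁ ((n : G) * g)) *
      (starRingEnd ℂ) (LinearMap.trace ℂ V₁ (ρ₁ ((n : G) * g)))
      = LinearMap.trace ℂ (V₁ →ₗ[ℂ] V₁) P := by
        rw [hPdef, map_smul, smul_eq_mul, hSdef, map_sum]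
        congr 1
        refine Finset.sum_congr rfl fun n _ => ?_
        rw [aux_trace_linHom, aux_char_inv_conj]
    _ = 1 := htrace

end Key

/-- Let `G` be a finite group, `N ⊴ G`, and `g ∈ G` with `G = ⟨N, g⟩`. If `ψ`, `ψ'` are
characters of irreducible complex representations of `G` whose restrictions to `N` are
irreducible, then the restriction of `ψ` to the coset `Ng` has norm `1`, and if the
restrictions of `ψ` and `ψ'` to `N` are distinct then the corresponding restrictions to
`Ng` are orthogonal. -/
theorem statement3 {G : Type*} [Group G] [Finite G]
    (N : Subgroup G) [N.Normal] (g : G)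
    (hgen : Subgroup.closure ((N : Set G) ∪ {g}) = ⊤)
    {V₁ : Type*} [AddCommGroup V₁] [Module ℂ V₁] [FiniteDimensional ℂ V₁] [Nontrivial V₁]
    {V₂ : Type*} [AddCommGroup V₂] [Module ℂ V₂] [FiniteDimensional ℂ V₂] [Nontrivial V₂]
    (ρ₁ : Representation ℂ G V₁) (ρ₂ : Representation ℂ G V₂)
    (hirr₁ : ∀ p : Submodule ℂ V₁, (∀ x : G, ∀ v ∈ p, ρ₁ x v ∈ p) → p = ⊥ ∨ p = ⊤)
    (hirr₂ : ∀ p : Submodule ℂ V₂, (∀ x : G, ∀ v ∈ p, ρ₂ x v ∈ p) → p = ⊥ ∨ p = ⊤)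
    (hirrN₁ : ∀ p : Submodule ℂ V₁, (∀ x ∈ N, ∀ v ∈ p, ρ₁ x v ∈ p) → p = ⊥ ∨ p = ⊤)
    (hirrN₂ : ∀ p : Submodule ℂ V₂, (∀ x ∈ N, ∀ v ∈ p, ρ₂ x v ∈ p) → p = ⊥ ∨ p = ⊤)
    (ψ ψ' : G → ℂ)
    (hψ : ψ = fun x => LinearMap.trace ℂ V₁ (ρ₁ x))
    (hψ' : ψ' = fun x => LinearMap.trace ℂ V₂ (ρ₂ x)) :
    (Nat.card N : ℂ)⁻¹ * (∑ᶠ n ∈ N, ψ (n * g) * (starRingEnd ℂ) (ψ (n * g))) = 1 ∧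
      ((∃ n ∈ N, ψ n ≠ ψ' n) →
        (Nat.card N : ℂ)⁻¹ * (∑ᶠ n ∈ N, ψ (n * g) * (starRingEnd ℂ) (ψ' (n * g))) = 0) := by
  classical
  haveI := Fintype.ofFinite G
  simp only [hψ, hψ']
  constructor
  · exact aux_norm N g ρ₁ hirrN₁
  · intro hne
    rw [aux_orth N g ρ₁ ρ₂ hirrN₁ hirrN₂ hne, mul_zero]
end

section
/- For every class function α on the coset Wφ, S(α·det_V^*)(x) = (−1)^r · x^{−r} · (S(α^*)(1/x))^σ as rational functions, where α·det_V^* denotes the class function uφ ↦ α(uφ)·conj(det(uφ)), S(α^*)(1/x) denotes the rational function S(α^*) with 1/x substituted for x, and σ is coefficientwise complex conjugation. -/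
set_option synthInstance.maxHeartbeats 1000000
set_option maxHeartbeats 1000000

namespace Stmt4

variable {V : Type*} [AddCommGroup V] [Module ℂ V]

/-- A reflection: an invertible linear endomorphism of finite order whose
fixed-point subspace is a hyperplane. -/
def IsReflection (g : (V →ₗ[ℂ] V)ˣ) : Prop :=
  IsOfFinOrder g ∧
    Module.finrank ℂ (LinearMap.ker ((g : V →ₗ[ℂ] V) - LinearMap.id)) + 1 =
      Module.finrank ℂ V

/-- `W` is generated by the reflections it contains. -/
def GeneratedByReflections (W : Subgroup (V →ₗ[ℂ] V)ˣ) : Prop :=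
  W = Subgroup.closure {g : (V →ₗ[ℂ] V)ˣ | g ∈ W ∧ IsReflection g}

/-- The polynomial `det (1 - x • g)`. -/
noncomputable def detOneSub [FiniteDimensional ℂ V] (g : V →ₗ[ℂ] V) : Polynomial ℂ :=
  Matrix.det (1 - (Polynomial.X : Polynomial ℂ) •
    ((LinearMap.toMatrix (Module.finBasis ℂ V) (Module.finBasis ℂ V) g).map
      fun a => Polynomial.C a))

/-- The rational function `S(α)(x) = (1/|H|) ∑_{u ∈ H} α(u b)/(det(1 - x·u b))^σ`
attached to a class function `α` on the coset `H·b`. -/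
noncomputable def Scoset [FiniteDimensional ℂ V] (H : Subgroup (V →ₗ[ℂ] V)ˣ)
    (b : (V →ₗ[ℂ] V)ˣ) (α : (V →ₗ[ℂ] V)ˣ → ℂ) : RatFunc ℂ :=
  (Nat.card H : RatFunc ℂ)⁻¹ *
    ∑ᶠ u ∈ H, RatFunc.C (α (u * b)) /
      algebraMap (Polynomial ℂ) (RatFunc ℂ)
        ((detOneSub ((u * b : (V →ₗ[ℂ] V)ˣ) : V →ₗ[ℂ] V)).map (starRingEnd ℂ))

/-- Coefficientwise complex conjugation `f ↦ f^σ` on rational functions. -/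
noncomputable def ratConjCoeff (f : RatFunc ℂ) : RatFunc ℂ :=
  RatFunc.eval ((RatFunc.C : ℂ →+* RatFunc ℂ).comp (starRingEnd ℂ)) RatFunc.X f

/-- The substitution `x ↦ 1/x` on rational functions. -/
noncomputable def ratSubInv (f : RatFunc ℂ) : RatFunc ℂ :=
  RatFunc.eval (RatFunc.C : ℂ →+* RatFunc ℂ) (RatFunc.X : RatFunc ℂ)⁻¹ f

/-! ### Auxiliary lemmas -/

lemma algMap_poly_eq_aeval (p : Polynomial ℂ) :
    algebraMap (Polynomial ℂ) (RatFunc ℂ) p = Polynomial.aeval (RatFunc.X : RatFunc ℂ) p := by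
  have h : (IsScalarTower.toAlgHom ℂ (Polynomial ℂ) (RatFunc ℂ)) =
      (Polynomial.aeval (RatFunc.X : RatFunc ℂ)) := by
    apply Polynomial.algHom_ext
    simp
  calc algebraMap (Polynomial ℂ) (RatFunc ℂ) p
      = (IsScalarTower.toAlgHom ℂ (Polynomial ℂ) (RatFunc ℂ)) p := rfl
    _ = Polynomial.aeval (RatFunc.X : RatFunc ℂ) p := by rw [h]

lemma transcendental_ratFuncX : Transcendental ℂ (RatFunc.X : RatFunc ℂ) := by
  rintro ⟨p, hp, hpz⟩
  rw [← algMap_poly_eq_aeval] at hpz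
  exact RatFunc.algebraMap_ne_zero hp hpz

lemma aeval_Xinv_ne_zero {p : Polynomial ℂ} (hp : p ≠ 0) :
    Polynomial.aeval ((RatFunc.X : RatFunc ℂ)⁻¹) p ≠ 0 := by
  intro h
  have halg : IsAlgebraic ℂ ((RatFunc.X : RatFunc ℂ)⁻¹) := ⟨p, hp, h⟩
  have h2 := halg.inv
  rw [inv_inv] at h2
  exact transcendental_ratFuncX h2

/-- The ring homomorphism `x ↦ 1/x` on rational functions. -/
noncomputable def subRingHom : RatFunc ℂ →+* RatFunc ℂ :=
  RatFunc.liftRingHom (Polynomial.aeval ((RatFunc.X : RatFunc ℂ)⁻¹)).toRingHom (by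
    intro p hp
    rw [mem_nonZeroDivisors_iff_ne_zero] at hp
    rw [Submonoid.mem_comap, mem_nonZeroDivisors_iff_ne_zero]
    exact aeval_Xinv_ne_zero hp)

/-- The ring homomorphism of coefficientwise conjugation on rational functions. -/
noncomputable def conjRingHom : RatFunc ℂ →+* RatFunc ℂ :=
  RatFunc.liftRingHom
    ((algebraMap (Polynomial ℂ) (RatFunc ℂ)).comp (Polynomial.mapRingHom (starRingEnd ℂ))) (by
    intro p hp
    rw [mem_nonZeroDivisors_iff_ne_zero] at hp
    rw [Submonoid.mem_comap, mem_nonZeroDivisors_iff_ne_zero]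
    exact RatFunc.algebraMap_ne_zero (Polynomial.map_ne_zero hp))

lemma subRingHom_algebraMap (p : Polynomial ℂ) :
    subRingHom (algebraMap (Polynomial ℂ) (RatFunc ℂ) p)
      = Polynomial.aeval ((RatFunc.X : RatFunc ℂ)⁻¹) p := by
  have h := RatFunc.liftRingHom_apply_div
    (Polynomial.aeval ((RatFunc.X : RatFunc ℂ)⁻¹)).toRingHom (by
      intro q hq
      rw [mem_nonZeroDivisors_iff_ne_zero] at hq
      rw [Submonoid.mem_comap, mem_nonZeroDivisors_iff_ne_zero]
      exact aeval_Xinv_ne_zero hq) p 1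
  simpa [subRingHom] using h

lemma conjRingHom_algebraMap (p : Polynomial ℂ) :
    conjRingHom (algebraMap (Polynomial ℂ) (RatFunc ℂ) p)
      = algebraMap (Polynomial ℂ) (RatFunc ℂ) (p.map (starRingEnd ℂ)) := by
  have h := RatFunc.liftRingHom_apply_div
    ((algebraMap (Polynomial ℂ) (RatFunc ℂ)).comp (Polynomial.mapRingHom (starRingEnd ℂ))) (by
      intro q hq
      rw [mem_nonZeroDivisors_iff_ne_zero] at hq
      rw [Submonoid.mem_comap, mem_nonZeroDivisors_iff_ne_zero]
      exact RatFunc.algebraMap_ne_zero (Polynomial.map_ne_zero hq)) p 1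
  simpa [conjRingHom] using h

lemma subRingHom_C (c : ℂ) : subRingHom (RatFunc.C c) = RatFunc.C c := by
  have h := subRingHom_algebraMap (Polynomial.C c)
  simpa using h

lemma conjRingHom_C (c : ℂ) :
    conjRingHom (RatFunc.C c) = RatFunc.C ((starRingEnd ℂ) c) := by
  have h := conjRingHom_algebraMap (Polynomial.C c)
  simpa using h

lemma conjRingHom_X : conjRingHom (RatFunc.X : RatFunc ℂ) = RatFunc.X := by
  have h := conjRingHom_algebraMap (Polynomial.X : Polynomial ℂ)
  simpa using h

lemma ratSubInv_eq (f : RatFunc ℂ) : ratSubInv f = subRingHom f := by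
  conv_rhs => rw [← RatFunc.num_div_denom f]
  rw [map_div₀, subRingHom_algebraMap, subRingHom_algebraMap]
  simp only [ratSubInv, RatFunc.eval]
  congr 1

lemma ratConjCoeff_eq (f : RatFunc ℂ) : ratConjCoeff f = conjRingHom f := by
  conv_rhs => rw [← RatFunc.num_div_denom f]
  rw [map_div₀, conjRingHom_algebraMap, conjRingHom_algebraMap]
  simp only [ratConjCoeff, RatFunc.eval]
  congr 1 <;>
  · rw [algMap_poly_eq_aeval, Polynomial.aeval_def, Polynomial.eval₂_map, RatFunc.algebraMap_eq_C]

lemma conjRingHom_aeval_Xinv (p : Polynomial ℂ) :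
    conjRingHom (Polynomial.aeval ((RatFunc.X : RatFunc ℂ)⁻¹) p)
      = Polynomial.aeval ((RatFunc.X : RatFunc ℂ)⁻¹) (p.map (starRingEnd ℂ)) := by
  induction p using Polynomial.induction_on' with
  | add p q hp hq => simp only [map_add, Polynomial.map_add, hp, hq]
  | monomial n a =>
    simp only [Polynomial.aeval_monomial, Polynomial.map_monomial, map_mul, map_pow, map_inv₀,
      RatFunc.algebraMap_eq_C, conjRingHom_C, conjRingHom_X]

lemma reverse_X_sub_C (μ : ℂ) :
    (Polynomial.X - Polynomial.C μ).reverse = 1 - Polynomial.C μ * Polynomial.X := by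
  ext i
  rw [Polynomial.reverse, Polynomial.natDegree_X_sub_C, Polynomial.coeff_reflect]
  match i with
  | 0 => simp
  | 1 => simp [Polynomial.coeff_one]
  | (n+2) =>
      rw [Polynomial.revAt_eq_self_of_lt (by omega)]
      simp [Polynomial.coeff_X, Polynomial.coeff_one]

lemma reverse_multiset_prod (s : Multiset ℂ) :
    ((s.map (fun μ => Polynomial.X - Polynomial.C μ)).prod).reverse
      = (s.map (fun μ => 1 - Polynomial.C μ * Polynomial.X)).prod := by
  induction s using Multiset.induction_on with
  | empty =>
      simp only [Multiset.map_zero, Multiset.prod_zero]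
      rw [← Polynomial.C_1, Polynomial.reverse_C]
  | cons a s ih =>
    simp only [Multiset.map_cons, Multiset.prod_cons]
    rw [Polynomial.reverse_mul_of_domain, reverse_X_sub_C, ih]

section
open Matrix in
lemma root_pow_eq_one {n : Type*} [DecidableEq n] [Fintype n] (M : Matrix n n ℂ) {N : ℕ}
    (hN : 0 < N) (hM : M ^ N = 1) {μ : ℂ} (hμ : μ ∈ M.charpoly.roots) : μ ^ N = 1 := by
  have hroot : M.charpoly.eval μ = 0 := (Polynomial.isRoot_of_mem_roots hμ)
  have hdet : (Matrix.scalar n μ - M).det = 0 := by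
    have h := eval_det (Matrix.charmatrix M) μ
    rw [Matrix.matPolyEquiv_charmatrix, Polynomial.eval_sub, Polynomial.eval_X,
      Polynomial.eval_C] at h
    rw [← h]
    exact hroot
  obtain ⟨v, hv0, hvM⟩ := Matrix.exists_mulVec_eq_zero_iff.2 hdet
  have hMv : M *ᵥ v = μ • v := by
    rw [Matrix.sub_mulVec, sub_eq_zero] at hvM
    rw [← hvM]
    ext i
    rw [Matrix.scalar_apply, Matrix.mulVec_diagonal]
    simp
  have key : ∀ k : ℕ, (M ^ k) *ᵥ v = μ ^ k • v := by
    intro k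
    induction k with
    | zero => simp [Matrix.one_mulVec]
    | succ k ih =>
      rw [pow_succ, ← Matrix.mulVec_mulVec, hMv, Matrix.mulVec_smul, ih, smul_smul, pow_succ,
        mul_comm]
  have hv : v = μ ^ N • v := by
    have h2 := key N
    rwa [hM, Matrix.one_mulVec] at h2
  obtain ⟨i, hi⟩ := Function.ne_iff.mp hv0
  have h3 : μ ^ N * v i = 1 * v i := by
    have h4 := congrFun hv i
    simpa [Pi.smul_apply, smul_eq_mul] using h4.symm
  exact mul_right_cancel₀ (by simpa using hi) h3

end

lemma finOrder_mul (W : Subgroup (V →ₗ[ℂ] V)ˣ) [Finite W] {φ u : (V →ₗ[ℂ] V)ˣ}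
    (hφ : IsOfFinOrder φ) (hφW : ∀ g : (V →ₗ[ℂ] V)ˣ, φ * g * φ⁻¹ ∈ W ↔ g ∈ W) (hu : u ∈ W) :
    IsOfFinOrder (u * φ) := by
  obtain ⟨n, hn, hφn⟩ := isOfFinOrder_iff_pow_eq_one.mp hφ
  have key : ∀ k : ℕ, ∃ w ∈ W, (u * φ) ^ k = w * φ ^ k := by
    intro k
    induction k with
    | zero => exact ⟨1, one_mem W, by simp⟩
    | succ k ih =>
      obtain ⟨w, hw, hwk⟩ := ih
      refine ⟨u * (φ * w * φ⁻¹), mul_mem hu ((hφW w).mpr hw), ?_⟩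
      rw [pow_succ', hwk]
      group
  obtain ⟨w, hw, hwn⟩ := key n
  rw [hφn, mul_one] at hwn
  have hwfin : IsOfFinOrder (⟨w, hw⟩ : W) := isOfFinOrder_of_finite _
  obtain ⟨m, hm, hwm⟩ := isOfFinOrder_iff_pow_eq_one.mp hwfin
  have hwm' : w ^ m = 1 := by
    have h := congrArg (Subtype.val) hwm
    simpa using h
  exact isOfFinOrder_iff_pow_eq_one.2
    ⟨n * m, by positivity, by rw [pow_mul, hwn, hwm']⟩

lemma key_core [FiniteDimensional ℂ V] (g : (V →ₗ[ℂ] V)ˣ) (hg : IsOfFinOrder g) :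
    RatFunc.C ((starRingEnd ℂ) (LinearMap.det (g : V →ₗ[ℂ] V)))
        * Polynomial.aeval ((RatFunc.X : RatFunc ℂ)⁻¹) (detOneSub (g : V →ₗ[ℂ] V))
      = (-1 : RatFunc ℂ) ^ Module.finrank ℂ V * ((RatFunc.X : RatFunc ℂ)⁻¹) ^ Module.finrank ℂ V
        * algebraMap (Polynomial ℂ) (RatFunc ℂ)
            ((detOneSub (g : V →ₗ[ℂ] V)).map (starRingEnd ℂ)) := by
  set b := Module.finBasis ℂ V with hb
  set M := LinearMap.toMatrix b b (g : V →ₗ[ℂ] V) with hM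
  obtain ⟨N, hN, hgN⟩ := isOfFinOrder_iff_pow_eq_one.mp hg
  have hMN : M ^ N = 1 := by
    rw [hM, LinearMap.toMatrix_pow, ← Units.val_pow_eq_pow_val, hgN, Units.val_one,
      LinearMap.toMatrix_one]
  have hsplit : M.charpoly.Splits := IsAlgClosed.splits _
  set s := M.charpoly.roots with hs
  have hcard : Multiset.card s = Module.finrank ℂ V := by
    rw [hs, Polynomial.splits_iff_card_roots.mp hsplit, Matrix.charpoly_natDegree_eq_dim,
      Fintype.card_fin]
  have hfac : M.charpoly = (s.map fun μ => Polynomial.X - Polynomial.C μ).prod :=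
    hsplit.eq_prod_roots_of_monic M.charpoly_monic
  have hq : detOneSub (g : V →ₗ[ℂ] V)
      = (s.map fun μ => 1 - Polynomial.C μ * Polynomial.X).prod := by
    have h1 : detOneSub (g : V →ₗ[ℂ] V) = M.charpolyRev := rfl
    rw [h1, ← Matrix.reverse_charpoly, hfac, reverse_multiset_prod]
  have hdet : LinearMap.det (g : V →ₗ[ℂ] V) = s.prod := by
    rw [← LinearMap.det_toMatrix b, Matrix.det_eq_prod_roots_charpoly]
  have hroot : ∀ μ ∈ s, μ ^ N = 1 := fun μ hμ => root_pow_eq_one M hN hMN hμ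
  have hμinv : ∀ μ ∈ s, (starRingEnd ℂ) μ = μ⁻¹ := fun μ hμ =>
    (Complex.inv_eq_conj (Complex.norm_eq_one_of_pow_eq_one (hroot μ hμ) hN.ne')).symm
  have hμ0 : ∀ μ ∈ s, μ ≠ 0 := by
    intro μ hμ h0
    have h1 := hroot μ hμ
    rw [h0, zero_pow hN.ne'] at h1
    exact zero_ne_one h1
  rw [hq, hdet]
  have L1 : RatFunc.C ((starRingEnd ℂ) s.prod)
      = (s.map fun μ => RatFunc.C ((starRingEnd ℂ) μ)).prod := by
    rw [map_multiset_prod, map_multiset_prod, Multiset.map_map]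
    rfl
  have L2 : (Polynomial.aeval ((RatFunc.X : RatFunc ℂ)⁻¹))
        ((s.map fun μ => 1 - Polynomial.C μ * Polynomial.X).prod)
      = (s.map fun μ => 1 - RatFunc.C μ * (RatFunc.X : RatFunc ℂ)⁻¹).prod := by
    rw [map_multiset_prod, Multiset.map_map]
    congr 1
    apply Multiset.map_congr rfl
    intro μ _
    simp [RatFunc.algebraMap_eq_C]
  have L3 : algebraMap (Polynomial ℂ) (RatFunc ℂ)
        (((s.map fun μ => 1 - Polynomial.C μ * Polynomial.X).prod).map (starRingEnd ℂ))
      = (s.map fun μ => 1 - RatFunc.C ((starRingEnd ℂ) μ) * (RatFunc.X : RatFunc ℂ)).prod := by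
    rw [← Polynomial.coe_mapRingHom, map_multiset_prod, map_multiset_prod, Multiset.map_map,
      Multiset.map_map]
    congr 1
    apply Multiset.map_congr rfl
    intro μ _
    simp [RatFunc.algebraMap_eq_C]
  have L4 : (-1 : RatFunc ℂ) ^ Module.finrank ℂ V
        * ((RatFunc.X : RatFunc ℂ)⁻¹) ^ Module.finrank ℂ V
      = (s.map fun _ => -(RatFunc.X : RatFunc ℂ)⁻¹).prod := by
    rw [Multiset.map_const', Multiset.prod_replicate, hcard]
    exact (neg_pow _ _).symm
  rw [L1, L2, L3, L4, ← Multiset.prod_map_mul, ← Multiset.prod_map_mul]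
  congr 1
  apply Multiset.map_congr rfl
  intro μ hμ
  rw [hμinv μ hμ]
  have hC : RatFunc.C μ ≠ 0 := by
    have h := (RingHom.injective (RatFunc.C : ℂ →+* RatFunc ℂ)).ne (hμ0 μ hμ)
    simpa using h
  have hX : (RatFunc.X : RatFunc ℂ) ≠ 0 := RatFunc.X_ne_zero
  rw [map_inv₀, mul_sub, mul_one, inv_mul_cancel_left₀ hC, mul_sub, mul_one]
  have h5 : -(RatFunc.X : RatFunc ℂ)⁻¹ * ((RatFunc.C μ)⁻¹ * RatFunc.X) = -(RatFunc.C μ)⁻¹ := by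
    rw [neg_mul, mul_comm ((RatFunc.C μ)⁻¹) RatFunc.X, ← mul_assoc, inv_mul_cancel₀ hX, one_mul]
  rw [h5]
  ring

/-- For every class function `α` on the coset `Wφ`,
`S(α·det_V^*)(x) = (-1)^r · x^{-r} · (S(α^*)(1/x))^σ`. -/
theorem statement4 [FiniteDimensional ℂ V] (hV : 0 < Module.finrank ℂ V)
    (W : Subgroup (V →ₗ[ℂ] V)ˣ) [Finite W] (hgen : GeneratedByReflections W)
    (φ : (V →ₗ[ℂ] V)ˣ) (hφ : IsOfFinOrder φ)
    (hφW : ∀ g : (V →ₗ[ℂ] V)ˣ, φ * g * φ⁻¹ ∈ W ↔ g ∈ W)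
    (α : (V →ₗ[ℂ] V)ˣ → ℂ)
    (hα : ∀ u ∈ W, ∀ v ∈ W, α (v * (u * φ) * v⁻¹) = α (u * φ)) :
    Scoset W φ (fun x => α x * (starRingEnd ℂ) (LinearMap.det (x : V →ₗ[ℂ] V))) =
      (-1 : RatFunc ℂ) ^ Module.finrank ℂ V *
        ((RatFunc.X : RatFunc ℂ)⁻¹) ^ Module.finrank ℂ V *
        ratConjCoeff (ratSubInv (Scoset W φ fun x => (starRingEnd ℂ) (α x))) := by
  classical
  rw [ratSubInv_eq, ratConjCoeff_eq]
  have hWfin : (W : Set (V →ₗ[ℂ] V)ˣ).Finite := Set.toFinite _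
  have hfs : ∀ (F : (V →ₗ[ℂ] V)ˣ → RatFunc ℂ),
      (∑ᶠ u ∈ W, F u) = ∑ u ∈ hWfin.toFinset, F u := fun F =>
    finsum_mem_eq_finite_toFinset_sum F hWfin
  simp only [Scoset]
  rw [hfs, hfs]
  simp only [map_mul, map_inv₀, map_natCast, map_sum]
  rw [mul_left_comm]
  congr 1
  rw [Finset.mul_sum]
  refine Finset.sum_congr rfl ?_
  intro u hu
  have huW : u ∈ W := by
    have h := hWfin.mem_toFinset.mp hu
    simpa using h
  have hg : IsOfFinOrder (u * φ) := finOrder_mul W hφ hφW huW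
  have hkey := key_core (u * φ) hg
  set q := detOneSub ((u * φ : (V →ₗ[ℂ] V)ˣ) : V →ₗ[ℂ] V) with hqdef
  have hq0 : q ≠ 0 := by
    intro h0
    have h1 : Polynomial.eval 0 q = 1 := by
      show Polynomial.eval 0
        ((LinearMap.toMatrix (Module.finBasis ℂ V) (Module.finBasis ℂ V)
          ((u * φ : (V →ₗ[ℂ] V)ˣ) : V →ₗ[ℂ] V)).charpolyRev) = 1
      exact Matrix.eval_charpolyRev
    rw [h0] at h1
    simp at h1
  have hqσ0 : q.map (starRingEnd ℂ) ≠ 0 := Polynomial.map_ne_zero hq0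
  have hA : algebraMap (Polynomial ℂ) (RatFunc ℂ) (q.map (starRingEnd ℂ)) ≠ 0 :=
    RatFunc.algebraMap_ne_zero hqσ0
  have hB : Polynomial.aeval ((RatFunc.X : RatFunc ℂ)⁻¹) q ≠ 0 := aeval_Xinv_ne_zero hq0
  rw [map_div₀, subRingHom_C, subRingHom_algebraMap, map_div₀, conjRingHom_C,
    conjRingHom_aeval_Xinv, Polynomial.map_map, Complex.conj_conj]
  have hcc : (starRingEnd ℂ).comp (starRingEnd ℂ) = RingHom.id ℂ := by
    ext z
    exact Complex.conj_conj z
  rw [hcc, Polynomial.map_id]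
  rw [← mul_div_assoc, div_eq_div_iff hA hB]
  linear_combination (RatFunc.C (α (u * φ))) * hkey

end Stmt4
end

section
/- Fix an integer e ≥ 1 and let ζ := exp(2πi/e) ∈ ℂ. For 0 ≤ k < i ≤ e−1 define the polynomial D_{i,k}(x) := ((ζ^k − ζ^i)/e) · x · ∏_{j ∈ {0,…,e−1}, j≠i, j≠k} (x − ζ^j) ∈ ℂ[x], and let D̄_{i,k} be obtained from D_{i,k} by complex-conjugating its coefficients (equivalently, replacing ζ by ζ^{−1}). Then, as an identity in ℂ[x,y]: Σ_{0≤k<i≤e−1} D_{i,k}(x)·D̄_{i,k}(y) = Σ_{j=1}^{e−1} x^j·y^j. -/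
namespace Stmt18

open Polynomial Finset

/-- The degree `Deg(ρ_{i,k})(x) = ((ζ^k - ζ^i)/e) · x · ∏_{j ≠ i,k} (x - ζ^j)` of a
nontrivial unipotent character of the spets attached to the cyclic group of order `e`. -/
noncomputable def Dpoly (e : ℕ) (ζ : ℂ) (i k : ℕ) : Polynomial ℂ :=
  Polynomial.C ((ζ ^ k - ζ ^ i) / (e : ℂ)) * Polynomial.X *
    ∏ j ∈ ((Finset.range e).erase i).erase k, (Polynomial.X - Polynomial.C (ζ ^ j))

private lemma geom {e : ℕ} {ζ : ℂ} (hp : IsPrimitiveRoot ζ e) (r : ℕ) :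
    ∑ t ∈ Finset.range e, ζ ^ (t * r) = if e ∣ r then (e : ℂ) else 0 := by
  have h1 : ζ ^ e = 1 := hp.pow_eq_one
  by_cases hd : e ∣ r
  · have : ∀ t ∈ Finset.range e, ζ ^ (t * r) = 1 := by
      intro t _
      obtain ⟨c, rfl⟩ := hd
      rw [show t * (e * c) = e * (t * c) by ring, pow_mul, h1, one_pow]
    rw [Finset.sum_congr rfl this]
    simp [hd]
  · have hne : ζ ^ r ≠ 1 := fun h => hd ((hp.pow_eq_one_iff_dvd r).mp h)
    have : ∀ t ∈ Finset.range e, ζ ^ (t * r) = (ζ ^ r) ^ t := by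
      intro t _; rw [← pow_mul, mul_comm]
    rw [Finset.sum_congr rfl this, geom_sum_eq hne, ← pow_mul, mul_comm r e, pow_mul, h1,
      one_pow, sub_self, zero_div, if_neg hd]

private lemma half_sum (f : ℕ → ℕ → ℂ) (hs : ∀ i k, f i k = f k i) (hd : ∀ i, f i i = 0)
    (e : ℕ) :
    ∑ i ∈ Finset.range e, ∑ k ∈ Finset.range e, f i k
      = 2 * ∑ i ∈ Finset.range e, ∑ k ∈ Finset.range i, f i k := by
  induction e with
  | zero => simp
  | succ n ih =>
    rw [Finset.sum_range_succ, Finset.sum_range_succ (fun i => ∑ k ∈ Finset.range i, f i k)]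
    have : ∀ i ∈ Finset.range n, ∑ k ∈ Finset.range (n+1), f i k
        = (∑ k ∈ Finset.range n, f i k) + f i n := by
      intro i _; rw [Finset.sum_range_succ]
    rw [Finset.sum_congr rfl this, Finset.sum_add_distrib, Finset.sum_range_succ, ih, hd]
    have : ∑ i ∈ Finset.range n, f i n = ∑ k ∈ Finset.range n, f n k := by
      apply Finset.sum_congr rfl; intro i _; rw [hs]
    rw [this]; ring

private lemma Ssum {e : ℕ} {ζ : ℂ} (hp : IsPrimitiveRoot ζ e) {m n : ℕ}
    (hm : m ∈ Finset.Ico 1 e) (hn : n ∈ Finset.Ico 1 e) :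
    ∑ i ∈ Finset.range e, ∑ k ∈ Finset.range i,
      (ζ ^ (k * (e - m)) - ζ ^ (i * (e - m))) * (ζ ^ (k * n) - ζ ^ (i * n))
      = if m = n then (e : ℂ) ^ 2 else 0 := by
  simp only [Finset.mem_Ico] at hm hn
  set f : ℕ → ℕ → ℂ := fun i k =>
    (ζ ^ (k * (e - m)) - ζ ^ (i * (e - m))) * (ζ ^ (k * n) - ζ ^ (i * n)) with hf
  have hs : ∀ i k, f i k = f k i := by intro i k; simp only [hf]; ring
  have hd : ∀ i, f i i = 0 := by intro i; simp [hf]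
  have key : ∑ i ∈ Finset.range e, ∑ k ∈ Finset.range e, f i k
      = 2 * (if m = n then (e : ℂ) ^ 2 else 0) := by
    have expand : ∀ i k, f i k = ζ ^ (k * (e - m + n)) + ζ ^ (i * (e - m + n))
        - ζ ^ (k * (e - m)) * ζ ^ (i * n) - ζ ^ (i * (e - m)) * ζ ^ (k * n) := by
      intro i k; simp only [hf]
      rw [show k * (e - m + n) = k * (e-m) + k * n by ring,
        show i * (e - m + n) = i * (e-m) + i * n by ring, pow_add, pow_add]
      ring
    have hnd : ¬ e ∣ n := Nat.not_dvd_of_pos_of_lt hn.1 hn.2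
    have hmd : ¬ e ∣ (e - m) := Nat.not_dvd_of_pos_of_lt (by omega) (by omega)
    have hmnd : (e ∣ (e - m + n)) ↔ m = n := by
      constructor
      · intro h
        have h1 : e - m + n = e := by
          rcases h with ⟨c, hc⟩
          have hlt : e * c < e * 2 := by omega
          have hc2 : c < 2 := lt_of_mul_lt_mul_left hlt (Nat.zero_le e)
          interval_cases c <;> omega
        omega
      · intro h; subst h; exact ⟨1, by omega⟩
    calc ∑ i ∈ Finset.range e, ∑ k ∈ Finset.range e, f i k
        = ∑ i ∈ Finset.range e, ((∑ k ∈ Finset.range e, ζ ^ (k * (e - m + n)))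
            + (e : ℂ) * ζ ^ (i * (e - m + n))
            - (∑ k ∈ Finset.range e, ζ ^ (k * (e - m))) * ζ ^ (i * n)
            - ζ ^ (i * (e - m)) * ∑ k ∈ Finset.range e, ζ ^ (k * n)) := by
          apply Finset.sum_congr rfl; intro i _
          simp only [expand]
          rw [Finset.sum_sub_distrib, Finset.sum_sub_distrib, Finset.sum_add_distrib,
            ← Finset.sum_mul, ← Finset.mul_sum]
          simp [mul_comm]
      _ = 2 * (if m = n then (e : ℂ) ^ 2 else 0) := by
          rw [geom hp, geom hp, geom hp, if_neg hnd, if_neg hmd]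
          simp only [mul_zero, zero_mul, sub_zero]
          rw [Finset.sum_add_distrib, Finset.sum_const, ← Finset.mul_sum, geom hp]
          by_cases h : m = n
          · rw [if_pos ((hmnd).mpr h), if_pos h]
            simp [Finset.card_range]; ring
          · rw [if_neg (fun hh => h (hmnd.mp hh)), if_neg h]
            simp
  have := half_sum f hs hd e
  rw [key] at this
  have h2 : (2 : ℂ) ≠ 0 := two_ne_zero
  exact mul_left_cancel₀ h2 this.symm

private lemma tel (a : ℂ) (N : ℕ) :
    (X - C a) * ∑ m ∈ Finset.Ico 1 (N + 1), C (a ^ (N - m)) * X ^ m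
      = X ^ (N + 1) - C (a ^ N) * X := by
  induction N with
  | zero => simp
  | succ n ih =>
    have step : ∑ m ∈ Finset.Ico 1 (n + 2), C (a ^ (n + 1 - m)) * X ^ m
        = C a * (∑ m ∈ Finset.Ico 1 (n + 1), C (a ^ (n - m)) * X ^ m) + X ^ (n + 1) := by
      rw [Finset.sum_Ico_succ_top (by omega), Finset.mul_sum]
      simp only [Nat.sub_self, pow_zero, map_one, one_mul]
      congr 1
      apply Finset.sum_congr rfl
      intro m hm
      simp only [Finset.mem_Ico] at hm
      rw [show n + 1 - m = (n - m) + 1 by omega, pow_succ, map_mul]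
      ring
    rw [step, pow_succ a, map_mul]
    linear_combination (C a) * ih

private lemma prod_range_X_sub_C {e : ℕ} {ζ : ℂ} (hp : IsPrimitiveRoot ζ e) (he : 0 < e) :
    ∏ j ∈ Finset.range e, (X - C (ζ ^ j)) = X ^ e - 1 := by
  have himg : Finset.image (fun j => ζ ^ j) (Finset.range e) = Polynomial.nthRootsFinset e (1 : ℂ) := by
    apply Finset.eq_of_subset_of_card_le
    · intro x hx
      simp only [Finset.mem_image, Finset.mem_range] at hx
      obtain ⟨j, _, rfl⟩ := hx
      exact (Polynomial.mem_nthRootsFinset he (1 : ℂ)).2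
        (by rw [← pow_mul, mul_comm, pow_mul, hp.pow_eq_one, one_pow])
    · rw [hp.card_nthRootsFinset, Finset.card_image_of_injOn hp.injOn_pow, Finset.card_range]
  rw [X_pow_sub_one_eq_prod he hp, ← himg,
    Finset.prod_image (fun a ha b hb hab => hp.injOn_pow ha hb hab)]

private lemma Dpoly_eq {e : ℕ} {ζ : ℂ} (hp : IsPrimitiveRoot ζ e) {i k : ℕ}
    (hi : i < e) (hk : k < i) :
    Dpoly e ζ i k = C (1 / (e : ℂ)) *
      ∑ m ∈ Finset.Ico 1 e, C (ζ ^ (k * (e - m)) - ζ ^ (i * (e - m))) * X ^ m := by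
  have he : 0 < e := lt_of_le_of_lt (Nat.zero_le _) (lt_trans hk hi)
  have hik : i ≠ k := (Nat.ne_of_gt hk)
  have hext : ∑ m ∈ Finset.Ico 1 e, C (ζ ^ (k * (e - m)) - ζ ^ (i * (e - m))) * X ^ m
      = ∑ m ∈ Finset.Ico 1 (e + 1), C (ζ ^ (k * (e - m)) - ζ ^ (i * (e - m))) * X ^ m := by
    rw [Finset.sum_Ico_succ_top (by omega)]
    simp
  have hpow : ∀ a : ℕ, ∑ m ∈ Finset.Ico 1 (e+1), (C (ζ ^ (a * (e - m))) : Polynomial ℂ) * X ^ m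
      = ∑ m ∈ Finset.Ico 1 (e+1), C ((ζ ^ a) ^ (e - m)) * X ^ m := by
    intro a
    apply Finset.sum_congr rfl; intro m _
    rw [← pow_mul]
  have hmul : ∀ a : ℕ, (X - C (ζ ^ a)) * ∑ m ∈ Finset.Ico 1 (e+1), C ((ζ ^ a) ^ (e - m)) * X ^ m
      = X ^ (e+1) - X := by
    intro a
    rw [tel (ζ ^ a) e, ← pow_mul, mul_comm a e, pow_mul, hp.pow_eq_one, one_pow, map_one, one_mul]
  apply mul_left_cancel₀ (a := (X - C (ζ ^ i)) * (X - C (ζ ^ k)))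
    (mul_ne_zero (X_sub_C_ne_zero _) (X_sub_C_ne_zero _))
  have lhs : (X - C (ζ ^ i)) * (X - C (ζ ^ k)) * Dpoly e ζ i k
      = C ((ζ ^ k - ζ ^ i) / (e:ℂ)) * X * (X ^ e - 1) := by
    rw [Dpoly]
    have h1 : k ∈ (Finset.range e).erase i := by
      simp [Finset.mem_erase, Nat.ne_of_lt hk, lt_trans hk hi]
    have h2 : i ∈ Finset.range e := Finset.mem_range.mpr hi
    have h3 : (X - C (ζ ^ k)) *
          ∏ j ∈ ((Finset.range e).erase i).erase k, (X - C (ζ ^ j))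
        = ∏ j ∈ (Finset.range e).erase i, (X - C (ζ ^ j)) :=
      Finset.mul_prod_erase _ (fun j => X - C (ζ ^ j)) h1
    have h4 : (X - C (ζ ^ i)) * ∏ j ∈ (Finset.range e).erase i, (X - C (ζ ^ j))
        = ∏ j ∈ Finset.range e, (X - C (ζ ^ j)) :=
      Finset.mul_prod_erase _ (fun j => X - C (ζ ^ j)) h2
    calc (X - C (ζ ^ i)) * (X - C (ζ ^ k)) *
          (C ((ζ ^ k - ζ ^ i) / (e:ℂ)) * X *
            ∏ j ∈ ((Finset.range e).erase i).erase k, (X - C (ζ ^ j)))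
        = C ((ζ ^ k - ζ ^ i) / (e:ℂ)) * X *
          ((X - C (ζ ^ i)) * ((X - C (ζ ^ k)) *
            ∏ j ∈ ((Finset.range e).erase i).erase k, (X - C (ζ ^ j)))) := by ring
      _ = C ((ζ ^ k - ζ ^ i) / (e:ℂ)) * X * (X ^ e - 1) := by
          rw [h3, h4, prod_range_X_sub_C hp he]
  rw [lhs]
  rw [hext]
  have split : ∑ m ∈ Finset.Ico 1 (e+1),
        (C (ζ ^ (k * (e - m)) - ζ ^ (i * (e - m))) : Polynomial ℂ) * X ^ m
      = (∑ m ∈ Finset.Ico 1 (e+1), C ((ζ ^ k) ^ (e - m)) * X ^ m)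
        - ∑ m ∈ Finset.Ico 1 (e+1), C ((ζ ^ i) ^ (e - m)) * X ^ m := by
    rw [← Finset.sum_sub_distrib]
    apply Finset.sum_congr rfl; intro m _
    rw [map_sub, ← pow_mul, ← pow_mul]
    ring
  rw [split]
  have hc : (C ((ζ ^ k - ζ ^ i) / (e:ℂ)) : Polynomial ℂ)
      = C (1/(e:ℂ)) * (C (ζ ^ k) - C (ζ ^ i)) := by
    rw [← map_sub, ← map_mul]
    congr 1; ring
  linear_combination C (1/(e:ℂ)) * (X - C (ζ ^ k)) * hmul i
    - C (1/(e:ℂ)) * (X - C (ζ ^ i)) * hmul k + X * (X ^ e - 1) * hc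

private lemma coeffD {e : ℕ} {ζ : ℂ} (hp : IsPrimitiveRoot ζ e) {i k : ℕ}
    (hi : i < e) (hk : k < i) (m : ℕ) :
    (Dpoly e ζ i k).coeff m =
      if m ∈ Finset.Ico 1 e then (ζ ^ (k * (e - m)) - ζ ^ (i * (e - m))) / (e : ℂ) else 0 := by
  rw [Dpoly_eq hp hi hk, coeff_C_mul, finset_sum_coeff]
  simp only [coeff_C_mul, coeff_X_pow, mul_ite, mul_one, mul_zero]
  rw [Finset.sum_ite_eq (Finset.Ico 1 e) m (fun m' => ζ ^ (k * (e - m')) - ζ ^ (i * (e - m')))]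
  split_ifs with h
  · ring
  · ring

private lemma conj_pow {e : ℕ} {ζ : ℂ} (habs : ‖ζ‖ = 1) (hz : ζ ^ e = 1)
    (a m : ℕ) (hm : m ≤ e) :
    (starRingEnd ℂ) (ζ ^ (a * (e - m))) = ζ ^ (a * m) := by
  have h1 : ζ ^ (a * (e - m)) * ζ ^ (a * m) = 1 := by
    rw [← pow_add, ← Nat.mul_add, Nat.sub_add_cancel hm, mul_comm a e, pow_mul, hz, one_pow]
  have hinv : ζ⁻¹ = (starRingEnd ℂ) ζ := by
    rw [Complex.inv_def, Complex.normSq_eq_norm_sq, habs]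
    simp
  rw [map_pow, ← hinv, inv_pow]
  exact inv_eq_of_mul_eq_one_right h1

/-- The sum-formula identity in `ℂ[x,y]`:
`∑_{0 ≤ k < i ≤ e-1} D_{i,k}(x)·D̄_{i,k}(y) = ∑_{j=1}^{e-1} x^j y^j`, where the first
variable `x` is the inner one and the second variable `y` the outer one of
`(ℂ[x])[y]`. -/
theorem statement18 (e : ℕ) (he : 1 ≤ e) (ζ : ℂ)
    (hζ : ζ = Complex.exp (2 * Real.pi * Complex.I / (e : ℂ))) :
    (∑ i ∈ Finset.range e, ∑ k ∈ Finset.range i,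
        Polynomial.C (Dpoly e ζ i k) *
          Polynomial.map (Polynomial.C : ℂ →+* Polynomial ℂ)
            ((Dpoly e ζ i k).map (starRingEnd ℂ))) =
      ∑ j ∈ Finset.Ico 1 e,
        Polynomial.C ((Polynomial.X : Polynomial ℂ) ^ j) *
          (Polynomial.X : Polynomial (Polynomial ℂ)) ^ j := by
  have hp : IsPrimitiveRoot ζ e := by
    rw [hζ]; exact Complex.isPrimitiveRoot_exp e (by omega)
  have habs : ‖ζ‖ = 1 := by
    rw [hζ, Complex.norm_exp]
    convert Real.exp_zero using 2
    simp [Complex.div_re]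
  have hz : ζ ^ e = 1 := hp.pow_eq_one
  have hecast : ((e : ℂ)) ≠ 0 := Nat.cast_ne_zero.mpr (by omega)
  have coeffQ : ∀ i k : ℕ, i < e → k < i → ∀ n : ℕ,
      ((Dpoly e ζ i k).map (starRingEnd ℂ)).coeff n =
        if n ∈ Finset.Ico 1 e then (ζ ^ (k * n) - ζ ^ (i * n)) / (e : ℂ) else 0 := by
    intro i k hi hk n
    rw [coeff_map, coeffD hp hi hk]
    split_ifs with h
    · simp only [Finset.mem_Ico] at h
      rw [map_div₀, map_sub, conj_pow habs hz k n (le_of_lt h.2),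
        conj_pow habs hz i n (le_of_lt h.2)]
      simp
    · simp
  apply Polynomial.ext; intro n
  rw [finset_sum_coeff, finset_sum_coeff]
  simp only [finset_sum_coeff, coeff_C_mul, coeff_map, coeff_X_pow, mul_ite, mul_one, mul_zero]
  rw [Finset.sum_ite_eq (Finset.Ico 1 e) n (fun j => (X : Polynomial ℂ) ^ j)]
  apply Polynomial.ext; intro m
  rw [finset_sum_coeff]
  have lhs_eq : ∀ i ∈ Finset.range e,
      (∑ k ∈ Finset.range i, Dpoly e ζ i k *
        C ((starRingEnd ℂ) ((Dpoly e ζ i k).coeff n))).coeff m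
      = ∑ k ∈ Finset.range i,
          (if m ∈ Finset.Ico 1 e then (ζ ^ (k * (e - m)) - ζ ^ (i * (e - m))) / (e : ℂ) else 0) *
          (if n ∈ Finset.Ico 1 e then (ζ ^ (k * n) - ζ ^ (i * n)) / (e : ℂ) else 0) := by
    intro i hi
    rw [finset_sum_coeff]
    apply Finset.sum_congr rfl
    intro k hk
    simp only [Finset.mem_range] at hi hk
    rw [coeff_mul_C, coeffD hp hi hk, ← coeff_map, coeffQ i k hi hk]
  rw [Finset.sum_congr rfl lhs_eq]
  by_cases hn : n ∈ Finset.Ico 1 e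
  · by_cases hm : m ∈ Finset.Ico 1 e
    · simp only [if_pos hn, if_pos hm]
      have step : ∀ i ∈ Finset.range e, ∀ k ∈ Finset.range i,
          (ζ ^ (k * (e - m)) - ζ ^ (i * (e - m))) / (e : ℂ) *
            ((ζ ^ (k * n) - ζ ^ (i * n)) / (e : ℂ))
          = (1 / (e:ℂ)^2) *
            ((ζ ^ (k * (e - m)) - ζ ^ (i * (e - m))) * (ζ ^ (k * n) - ζ ^ (i * n))) := by
        intro i _ k _; ring
      calc ∑ i ∈ Finset.range e, ∑ k ∈ Finset.range i,
            (ζ ^ (k * (e - m)) - ζ ^ (i * (e - m))) / (e : ℂ) *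
              ((ζ ^ (k * n) - ζ ^ (i * n)) / (e : ℂ))
          = (1 / (e:ℂ)^2) * ∑ i ∈ Finset.range e, ∑ k ∈ Finset.range i,
              (ζ ^ (k * (e - m)) - ζ ^ (i * (e - m))) * (ζ ^ (k * n) - ζ ^ (i * n)) := by
            rw [Finset.mul_sum]
            apply Finset.sum_congr rfl
            intro i hi
            rw [Finset.mul_sum]
            apply Finset.sum_congr rfl
            intro k hk
            exact step i hi k hk
        _ = ((X : Polynomial ℂ) ^ n).coeff m := by
            rw [Ssum hp hm hn, coeff_X_pow]
            by_cases h : m = n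
            · rw [if_pos h, if_pos h]
              field_simp
            · rw [if_neg h, if_neg h, mul_zero]
    · simp only [if_neg hm, zero_mul, Finset.sum_const_zero]
      rw [if_pos hn, coeff_X_pow, if_neg (by rintro rfl; exact hm hn)]
  · simp only [if_neg hn, mul_zero, Finset.sum_const_zero, coeff_zero]

end Stmt18
end
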